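/- arXiv:2402.01953 — 3 statements merged into one kernel-verified Lean document; each statement's English description precedes it below -/
import Mathlib

section
/- Let d = 2. For every real p with 1 < p < log 10 / log 5, there do not exist constants σ > 0 and c_1, c_2 > 0 such that c_1 σ^{−m} ≤ E_{p,m}(Q, Γ(Q)^c) ≤ c_2 σ^{−m} holds for every n ≥ 1, every m ≥ 0 and every Q ∈ Q_n^(2)(F^(2)). (Failure of property (A_p) for the planar fractal F^(2).) -/
open Set MeasureTheory Filter
open scoped Classical

noncomputable section

/-- Points of `ℝ^d` with the Euclidean metric. -/
abbrev Pt (d : ℕ) := EuclideanSpace ℝ (Fin d)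

/-- The closed cube `∏ [(lᵢ-1)/5ⁿ, lᵢ/5ⁿ]`. -/
def cube (d n : ℕ) (l : Fin d → ℕ) : Set (Pt d) :=
  {x | ∀ i, ((l i : ℝ) - 1) / 5 ^ n ≤ x i ∧ x i ≤ (l i : ℝ) / 5 ^ n}

/-- The collection `𝒬ₙ⁽ᵈ⁾` of level-`n` cubes. -/
def Qcol (d n : ℕ) : Set (Set (Pt d)) :=
  {Q | ∃ l : Fin d → ℕ, (∀ i, 1 ≤ l i ∧ l i ≤ 5 ^ n) ∧ Q = cube d n l}

/-- `𝒬ₙ⁽ᵈ⁾(A)`: the level-`n` cubes whose interior meets `A`. -/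
def QcolOf (d n : ℕ) (A : Set (Pt d)) : Set (Set (Pt d)) :=
  {Q | Q ∈ Qcol d n ∧ (interior Q ∩ A).Nonempty}

/-- `F₀⁽ᵈ⁾ = [0,1]^d`. -/
def F0 (d : ℕ) : Set (Pt d) := {x | ∀ i, x i ∈ Icc (0 : ℝ) 1}

/-- `F₁⁽ᵈ⁾`. -/
def F1 (d : ℕ) : Set (Pt d) :=
  F0 d \ ⋃ i : Fin d, {x | (∀ j, j < i → x j ∈ Ioo (2/5 : ℝ) (3/5)) ∧
    x i ∈ Ioo (1/5 : ℝ) (2/5) ∪ Ioo (3/5 : ℝ) (4/5) ∧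
    ∀ j, i < j → x j ∈ Ioo (2/5 : ℝ) (3/5)}

/-- The orientation-preserving affine map from `[0,1]^d` onto the cube indexed by `l` at
level `n`. -/
def psi (d n : ℕ) (l : Fin d → ℕ) (x : Pt d) : Pt d :=
  WithLp.toLp 2 (fun i => ((l i : ℝ) - 1) / 5 ^ n + x i / 5 ^ n)

/-- The approximations `Fₙ⁽ᵈ⁾`. -/
def Fn (d : ℕ) : ℕ → Set (Pt d)
  | 0 => F0 d
  | 1 => F1 d
  | n + 2 => ⋃ l ∈ {l : Fin d → ℕ | cube d 1 l ∈ QcolOf d 1 (F1 d)}, psi d 1 l '' Fn d (n + 1)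

/-- The fractal `F⁽ᵈ⁾`. -/
def Fset (d : ℕ) : Set (Pt d) := ⋂ n, Fn d n

/-- `G₁⁽ᵈ⁾`: union of the level-1 cubes of `F₁⁽ᵈ⁾` which meet the boundary of `[0,1]^d`. -/
def G1 (d : ℕ) : Set (Pt d) :=
  ⋃ Q ∈ {Q | Q ∈ QcolOf d 1 (F1 d) ∧ (Q ∩ frontier (F0 d)).Nonempty}, Q

/-- The approximations `Gₙ⁽ᵈ⁾`. -/
def Gn (d : ℕ) : ℕ → Set (Pt d)
  | 0 => F0 d
  | 1 => G1 d
  | n + 2 => ⋃ l ∈ {l : Fin d → ℕ | cube d 1 l ∈ QcolOf d 1 (G1 d)}, psi d 1 l '' Gn d (n + 1)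

/-- The boundary fractal `G⁽ᵈ⁾ = [0,1]^d ∩ ⋂_{n ≥ 1} Gₙ⁽ᵈ⁾`. -/
def Gset (d : ℕ) : Set (Pt d) := F0 d ∩ ⋂ n, ⋂ (_ : 1 ≤ n), Gn d n

/-- The discrete `p`-energy `𝓔ₚⁿ(f)` on the level-`n` cubes of `F⁽ᵈ⁾`. -/
def energy (d n : ℕ) (p : ℝ) (f : Set (Pt d) → ℝ) : ℝ :=
  (1 / 2) * ∑' Q : QcolOf d n (Fset d), ∑' Q' : QcolOf d n (Fset d),
    if ((Q : Set (Pt d)) ∩ (Q' : Set (Pt d))).Nonempty then |f Q - f Q'| ^ p else 0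

/-- `Sᵐ(A)`: level-`(n+m)` cubes of `F⁽ᵈ⁾` contained in some cube of `A`. -/
def Sm (d n m : ℕ) (A : Set (Set (Pt d))) : Set (Set (Pt d)) :=
  {Q | Q ∈ QcolOf d (n + m) (Fset d) ∧ ∃ Q' ∈ A, Q ⊆ Q'}

/-- The effective `p`-conductance `𝓔_{p,m}(A₁, A₂)`. -/
def conduct (d n m : ℕ) (p : ℝ) (A₁ A₂ : Set (Set (Pt d))) : ℝ :=
  sInf {e : ℝ | ∃ f : Set (Pt d) → ℝ,
    (∀ Q ∈ Sm d n m A₁, f Q = 1) ∧ (∀ Q ∈ Sm d n m A₂, f Q = 0) ∧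
    e = energy d (n + m) p f}

/-- `Γ(Q)`: level-`n` cubes of `F⁽ᵈ⁾` meeting `Q`. -/
def Gam (d n : ℕ) (Q : Set (Pt d)) : Set (Set (Pt d)) :=
  {Q' | Q' ∈ QcolOf d n (Fset d) ∧ (Q' ∩ Q).Nonempty}

/-- `Γ(Q)ᶜ = 𝒬ₙ⁽ᵈ⁾(F⁽ᵈ⁾) \ Γ(Q)`. -/
def GamC (d n : ℕ) (Q : Set (Pt d)) : Set (Set (Pt d)) :=
  QcolOf d n (Fset d) \ Gam d n Q

/-- The corner cube `[0, 1/5]^d`. -/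
def Qone (d : ℕ) : Set (Pt d) := {x | ∀ i, x i ∈ Icc (0 : ℝ) (1/5)}

/-- The center cube `[2/5, 3/5]^d`. -/
def Qtwo (d : ℕ) : Set (Pt d) := {x | ∀ i, x i ∈ Icc (2/5 : ℝ) (3/5)}

end


noncomputable section
/-- center of a cube -/
def ctr (d N : ℕ) (l : Fin d → ℕ) : Pt d := WithLp.toLp 2 (fun i => ((l i : ℝ) - 1/2) / 5 ^ N)

lemma ctr_mem (d N l) : ctr d N l ∈ cube d N l := by
  intro i
  constructor <;> · unfold ctr; simp only [PiLp.toLp_apply]; gcongr <;> norm_num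

/-- the open box -/
def obox (d n : ℕ) (l : Fin d → ℕ) : Set (Pt d) :=
  {x | ∀ i, ((l i : ℝ) - 1) / 5 ^ n < x i ∧ x i < (l i : ℝ) / 5 ^ n}

lemma obox_isOpen (d n l) : IsOpen (obox d n l) := by
  have : obox d n l = ⋂ i : Fin d,
      ((EuclideanSpace.proj i : EuclideanSpace ℝ (Fin d) →L[ℝ] ℝ) ⁻¹'
        Ioo (((l i : ℝ) - 1) / 5 ^ n) ((l i : ℝ) / 5 ^ n)) := by
    ext x; simp [obox, PiLp.proj_apply, Ioo]
  rw [this]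
  exact isOpen_iInter_of_finite fun i =>
    (isOpen_Ioo).preimage (EuclideanSpace.proj i).continuous

lemma obox_subset_interior (d n l) : obox d n l ⊆ interior (cube d n l) :=
  interior_maximal (fun x hx i => ⟨(hx i).1.le, (hx i).2.le⟩) (obox_isOpen d n l)

lemma ctr_mem_obox (d N l) : ctr d N l ∈ obox d N l := by
  intro i
  constructor <;> · unfold ctr; simp only [PiLp.toLp_apply]; gcongr <;> norm_num

lemma interior_subset_obox (d n l) : interior (cube d n l) ⊆ obox d n l := by
  intro x hx
  obtain ⟨ε, hε, hball⟩ := Metric.isOpen_iff.1 isOpen_interior x hx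
  have hx' := interior_subset hx
  intro i
  have hmem : ∀ (t : ℝ), |t| < ε → x + t • EuclideanSpace.single i (1:ℝ) ∈ cube d n l := by
    intro t ht
    apply interior_subset (hball ?_)
    rw [Metric.mem_ball, dist_eq_norm]
    simpa [norm_smul, abs_of_nonneg] using ht
  have h1 := hmem (ε/2) (by rw [abs_of_pos (by positivity)]; linarith)
  have h2 := hmem (-(ε/2)) (by rw [abs_neg, abs_of_pos (by positivity)]; linarith)
  have e1 : (x + (ε/2) • EuclideanSpace.single i (1:ℝ)) i = x i + ε/2 := by
    simp [EuclideanSpace.single_apply]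
  have e2 : (x + (-(ε/2)) • EuclideanSpace.single i (1:ℝ)) i = x i - ε/2 := by
    simp [EuclideanSpace.single_apply]; ring
  have b1 := (h1 i).2
  have b2 := (h2 i).1
  rw [e1] at b1; rw [e2] at b2
  constructor <;> [linarith; linarith]

lemma cube_inj {d N : ℕ} {l l' : Fin d → ℕ} (h : cube d N l = cube d N l') : l = l' := by
  have h1 : ctr d N l ∈ cube d N l' := h ▸ ctr_mem d N l
  funext i
  have := h1 i
  unfold ctr at this
  simp only [PiLp.toLp_apply] at this
  have h5 : (0:ℝ) < 5 ^ N := by positivity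
  obtain ⟨ha, hb⟩ := this
  rw [div_le_div_iff₀ h5 h5] at ha
  rw [div_le_div_iff₀ h5 h5] at hb
  have ha' : (l' i : ℝ) - 1 ≤ (l i : ℝ) - 1/2 := le_of_mul_le_mul_right (by linarith) h5
  have hb' : (l i : ℝ) - 1/2 ≤ (l' i : ℝ) := le_of_mul_le_mul_right (by linarith) h5
  have c1 : (l i : ℝ) < (l' i : ℝ) + 1 := by linarith
  have c2 : (l' i : ℝ) < (l i : ℝ) + 1 := by linarith
  have d1 : l i < l' i + 1 := by exact_mod_cast c1
  have d2 : l' i < l i + 1 := by exact_mod_cast c2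
  omega


open Finset in
/-- digit `k` of `n` base 5 -/
def dig (k n : ℕ) : ℕ := n / 5 ^ k % 5

/-- removed cells -/
def bad (a b : ℕ) : Prop := ((a = 1 ∨ a = 3) ∧ b = 2) ∨ (a = 2 ∧ (b = 1 ∨ b = 3))

lemma dig_lt5 (k n : ℕ) : dig k n < 5 := Nat.mod_lt _ (by norm_num)

lemma dig_small {k n : ℕ} (h : n < 5 ^ k) : dig k n = 0 := by
  unfold dig; rw [Nat.div_eq_of_lt h]

lemma dig_mod {k M n : ℕ} (h : k < M) : dig k (n % 5 ^ M) = dig k n := by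
  unfold dig
  conv_rhs => rw [← Nat.div_add_mod n (5 ^ M)]
  obtain ⟨j, rfl⟩ : ∃ j, M = k + (j + 1) := ⟨M - k - 1, by omega⟩
  have h5 : (5:ℕ) ^ (k + (j+1)) = 5 ^ k * (5 ^ j * 5) := by ring
  rw [h5]
  rw [show 5 ^ k * (5 ^ j * 5) * (n / (5 ^ k * (5 ^ j * 5))) + n % (5 ^ k * (5 ^ j * 5))
      = n % (5 ^ k * (5 ^ j * 5)) + 5 ^ k * ((5 ^ j * 5) * (n / (5 ^ k * (5 ^ j * 5)))) by ring]
  rw [Nat.add_mul_div_left _ _ (by positivity : (0:ℕ) < 5 ^ k)]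
  rw [show 5 ^ j * 5 * (n / (5 ^ k * (5 ^ j * 5)))
      = 5 * (5 ^ j * (n / (5 ^ k * (5 ^ j * 5)))) by ring]
  rw [Nat.add_mul_mod_self_left]

lemma not_bad_04 {a b : ℕ} (h : b = 0 ∨ b = 4) : ¬ bad a b := by
  unfold bad; omega

lemma not_bad_00 : ¬ bad 0 0 := by unfold bad; omega

open Finset in
lemma valsum_lt (c : ℕ → ℕ) (hc : ∀ k, c k ≤ 4) (m : ℕ) :
    ∑ k ∈ range m, c k * 5 ^ k < 5 ^ m := by
  induction m with
  | zero => simp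
  | succ m ih =>
      rw [Finset.sum_range_succ]
      have := hc m
      have : c m * 5 ^ m ≤ 4 * 5 ^ m := by
        exact Nat.mul_le_mul_right _ (hc m)
      have h2 : (5:ℕ) ^ (m+1) = 5 * 5 ^ m := by ring
      omega

open Finset in
lemma valsum_dig (c : ℕ → ℕ) (hc : ∀ k, c k ≤ 4) (m j : ℕ) (hj : j < m) :
    dig j (∑ k ∈ range m, c k * 5 ^ k) = c j := by
  induction j generalizing c m with
  | zero =>
      obtain ⟨m', rfl⟩ : ∃ m', m = m' + 1 := ⟨m - 1, by omega⟩
      rw [Finset.sum_range_succ']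
      have hs : (∑ x ∈ range m', c (x+1) * 5 ^ (x+1)) = 5 * ∑ x ∈ range m', c (x+1) * 5 ^ x := by
        rw [Finset.mul_sum]; exact Finset.sum_congr rfl (fun x _ => by ring)
      rw [hs]
      have hc0 := hc 0
      simp only [dig, pow_zero, mul_one, Nat.div_one]
      omega
  | succ j ihj =>
      obtain ⟨m', rfl⟩ : ∃ m', m = m' + 1 := ⟨m - 1, by omega⟩
      rw [Finset.sum_range_succ']
      have hs : (∑ x ∈ range m', c (x+1) * 5 ^ (x+1)) = 5 * ∑ x ∈ range m', c (x+1) * 5 ^ x := by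
        rw [Finset.mul_sum]; exact Finset.sum_congr rfl (fun x _ => by ring)
      rw [hs]
      set t := ∑ x ∈ range m', c (x+1) * 5 ^ x with ht
      unfold dig
      rw [pow_succ', ← Nat.div_div_eq_div_mul]
      have hc0 := hc 0
      have hdiv : (5 * t + c 0 * 5 ^ 0) / 5 = t := by simp only [pow_zero, mul_one]; omega
      rw [hdiv]
      exact ihj (fun k => c (k+1)) (fun k => hc (k+1)) m' (by omega)

def allowed (l : Fin 2 → ℕ) : Prop := ∀ k, ¬ bad (dig k (l 0 - 1)) (dig k (l 1 - 1))

lemma ctr_mem_F0 {N : ℕ} {l : Fin 2 → ℕ} (h1 : ∀ i, 1 ≤ l i) (h2 : ∀ i, l i ≤ 5 ^ N) :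
    ctr 2 N l ∈ F0 2 := by
  intro i
  have hi1 := h1 i; have hi2 := h2 i
  have c1 : (1:ℝ) ≤ l i := by exact_mod_cast hi1
  have c2 : (l i : ℝ) ≤ 5 ^ N := by exact_mod_cast hi2
  have h5 : (0:ℝ) < 5 ^ N := by positivity
  constructor
  · unfold ctr
    exact div_nonneg (by linarith) h5.le
  · unfold ctr
    rw [div_le_one h5]; linarith

lemma dig_top {N l t : ℕ} (hN : 1 ≤ N) (h1 : 1 ≤ l) (ht : t ≤ 4)
    (hlo : (t:ℝ)/5 < ((l:ℝ) - 1/2)/5^N) (hhi : ((l:ℝ) - 1/2)/5^N < ((t:ℝ)+1)/5) :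
    dig (N-1) (l-1) = t := by
  obtain ⟨M, rfl⟩ : ∃ M, N = M + 1 := ⟨N - 1, by omega⟩
  simp only [Nat.add_sub_cancel]
  set a := (l-1) / 5^M with ha
  set r := (l-1) % 5^M with hrdef
  have hd : 5^M * a + r = l - 1 := Nat.div_add_mod _ _
  have hr : r < 5^M := Nat.mod_lt _ (by positivity)
  have hl : ((l:ℝ) - 1) = 5^M * a + r := by
    have : ((l - 1 : ℕ) : ℝ) = (l:ℝ) - 1 := by
      rw [Nat.cast_sub h1]; norm_num
    rw [← this, ← hd]; push_cast; ring
  have h5M : (0:ℝ) < 5^M := by positivity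
  have hrR : (r:ℝ) ≤ 5^M - 1 := by
    have : (r:ℝ) < 5^M := by exact_mod_cast hr
    have : (r:ℝ) + 1 ≤ 5^M := by exact_mod_cast hr
    linarith
  have hrR0 : (0:ℝ) ≤ r := Nat.cast_nonneg r
  have e5 : (5:ℝ)^(M+1) = 5^M * 5 := by ring
  rw [e5] at hlo hhi
  rw [div_lt_div_iff₀ (by norm_num) (by positivity)] at hlo
  rw [div_lt_div_iff₀ (by positivity) (by norm_num)] at hhi
  -- hlo : t * (5^M * 5) < (l - 1/2) * 5 ; hhi : (l - 1/2) * 5 < (t+1) * (5^M*5)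
  have hlt : (t:ℝ) < a + 1 := by nlinarith [hl]
  have hgt : (a:ℝ) < t + 1 := by nlinarith [hl]
  have n1 : t < a + 1 := by exact_mod_cast hlt
  have n2 : a < t + 1 := by exact_mod_cast hgt
  have hat : a = t := by omega
  unfold dig
  rw [← ha, hat]
  exact Nat.mod_eq_of_lt (by omega)

lemma Fn_two : Fn 2 1 = F1 2 := rfl

lemma Fn_succ (k : ℕ) : Fn 2 (k+2) =
    ⋃ l ∈ {l : Fin 2 → ℕ | cube 2 1 l ∈ QcolOf 2 1 (F1 2)}, psi 2 1 l '' Fn 2 (k + 1) := rfl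

theorem centerIn (K : ℕ) : ∀ (N : ℕ) (l : Fin 2 → ℕ), (∀ i, 1 ≤ l i) → (∀ i, l i ≤ 5 ^ N) →
    allowed l → ctr 2 N l ∈ Fn 2 K := by
  induction K using Nat.strong_induction_on with
  | _ K IH =>
  intro N₀ l₀ h1₀ h2₀ h3₀
  -- normalize to N ≥ 1
  obtain ⟨N, l, hN, h1, h2, h3, hctr⟩ :
      ∃ N l, 1 ≤ N ∧ (∀ i, 1 ≤ l i) ∧ (∀ i, l i ≤ 5 ^ N) ∧ allowed l ∧
        ctr 2 N₀ l₀ = ctr 2 N l := by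
    rcases Nat.eq_zero_or_pos N₀ with h | h
    · subst h
      have hl1 : ∀ i, l₀ i = 1 := fun i => le_antisymm (by simpa using h2₀ i) (h1₀ i)
      refine ⟨1, fun _ => 3, le_refl 1, fun _ => by norm_num, fun _ => by norm_num, ?_, ?_⟩
      · intro k
        rcases Nat.eq_zero_or_pos k with hk | hk
        · subst hk; simp only [dig, pow_zero, Nat.div_one]
          intro hb; exact absurd hb (by unfold bad; omega)
        · have : dig k (3 - 1) = 0 := dig_small (by
            calc (2:ℕ) < 5 ^ 1 := by norm_num
            _ ≤ 5 ^ k := Nat.pow_le_pow_right (by norm_num) hk)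
          simp only [this]; exact not_bad_00
      · ext i
        unfold ctr; simp only [PiLp.toLp_apply]; rw [hl1 i]; norm_num
    · exact ⟨N₀, l₀, h, h1₀, h2₀, h3₀, rfl⟩
  rw [hctr]
  clear hctr h1₀ h2₀ h3₀
  obtain ⟨M, rfl⟩ : ∃ M, N = M + 1 := ⟨N - 1, by omega⟩
  match K with
  | 0 => exact ctr_mem_F0 h1 h2
  | 1 =>
      refine ⟨ctr_mem_F0 h1 h2, ?_⟩
      intro hmem
      simp only [Set.mem_iUnion] at hmem
      obtain ⟨i, hi⟩ := hmem
      have key : ∀ j : Fin 2, ∀ t : ℕ, t ≤ 4 →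
          ((t:ℝ)/5 < ctr 2 (M+1) l j ∧ ctr 2 (M+1) l j < ((t:ℝ)+1)/5) →
          dig M (l j - 1) = t := by
        intro j t htle h
        have := dig_top (N := M+1) (l := l j) (t := t) (by omega) (h1 j) htle
          (by simpa [ctr] using h.1) (by simpa [ctr] using h.2)
        simpa using this
      fin_cases i
      · -- i = 0 : x 0 ∈ (1/5,2/5) ∪ (3/5,4/5), x 1 ∈ (2/5,3/5)
        obtain ⟨-, hu, hrest⟩ := hi
        have hx1 : ctr 2 (M+1) l 1 ∈ Set.Ioo (2/5:ℝ) (3/5) := hrest 1 (by decide)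
        have d1 : dig M (l 1 - 1) = 2 := key 1 2 (by norm_num)
          ⟨by norm_num at hx1 ⊢; exact hx1.1, by norm_num at hx1 ⊢; exact hx1.2⟩
        rcases hu with hu | hu
        · have d0 : dig M (l 0 - 1) = 1 := key 0 1 (by norm_num)
            ⟨by norm_num at hu ⊢; exact hu.1, by norm_num at hu ⊢; exact hu.2⟩
          exact h3 M (by rw [d0, d1]; unfold bad; omega)
        · have d0 : dig M (l 0 - 1) = 3 := key 0 3 (by norm_num)
            ⟨by norm_num at hu ⊢; exact hu.1, by norm_num at hu ⊢; exact hu.2⟩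
          exact h3 M (by rw [d0, d1]; unfold bad; omega)
      · -- i = 1
        obtain ⟨hpre, hu, -⟩ := hi
        have hx0 : ctr 2 (M+1) l 0 ∈ Set.Ioo (2/5:ℝ) (3/5) := hpre 0 (by decide)
        have d0 : dig M (l 0 - 1) = 2 := key 0 2 (by norm_num)
          ⟨by norm_num at hx0 ⊢; exact hx0.1, by norm_num at hx0 ⊢; exact hx0.2⟩
        rcases hu with hu | hu
        · have d1 : dig M (l 1 - 1) = 1 := key 1 1 (by norm_num)
            ⟨by norm_num at hu ⊢; exact hu.1, by norm_num at hu ⊢; exact hu.2⟩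
          exact h3 M (by rw [d0, d1]; unfold bad; omega)
        · have d1 : dig M (l 1 - 1) = 3 := key 1 3 (by norm_num)
            ⟨by norm_num at hu ⊢; exact hu.1, by norm_num at hu ⊢; exact hu.2⟩
          exact h3 M (by rw [d0, d1]; unfold bad; omega)
  | (k+2) =>
      rw [Fn_succ]
      set a : Fin 2 → ℕ := fun i => (l i - 1) / 5 ^ M with hadef
      set r : Fin 2 → ℕ := fun i => (l i - 1) % 5 ^ M + 1 with hrdef
      have h5M : (0:ℕ) < 5 ^ M := by positivity
      have haeq : ∀ i, a i = (l i - 1) / 5 ^ M := fun _ => rfl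
      have hreq : ∀ i, r i = (l i - 1) % 5 ^ M + 1 := fun _ => rfl
      have ha4 : ∀ i, a i ≤ 4 := by
        intro i
        have h5 : (5:ℕ) ^ (M+1) = 5 * 5 ^ M := by ring
        have hlt : l i - 1 < 5 * 5 ^ M := by have := h2 i; omega
        have := (Nat.div_lt_iff_lt_mul h5M).2 hlt
        have := haeq i
        omega
      have hdigtop : ∀ i, dig M (l i - 1) = a i := by
        intro i; unfold dig; have := haeq i; have := ha4 i; omega
      have hdiva : ∀ i, 5 ^ M * a i + (l i - 1) % 5 ^ M = l i - 1 :=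
        fun i => Nat.div_add_mod _ _
      have hr1 : ∀ i, 1 ≤ r i := fun i => Nat.le_add_left _ _
      have hr2 : ∀ i, r i ≤ 5 ^ M := by
        intro i; have := Nat.mod_lt (l i - 1) h5M; have := hreq i; omega
      have hallr : allowed r := by
        intro k'
        have hd : ∀ i, dig k' (r i - 1) = if k' < M then dig k' (l i - 1) else 0 := by
          intro i
          simp only [hrdef, Nat.add_sub_cancel]
          split
          · exact dig_mod ‹k' < M›
          · exact dig_small (lt_of_lt_of_le (Nat.mod_lt _ h5M)
              (Nat.pow_le_pow_right (by norm_num) (by omega)))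
        rw [hd 0, hd 1]
        split
        · exact h3 k'
        · exact not_bad_00
      have halla : allowed (fun i => a i + 1) := by
        intro k'
        have hd : ∀ i, dig k' (a i + 1 - 1) = if k' = 0 then a i else 0 := by
          intro i
          simp only [Nat.add_sub_cancel]
          split
          · subst ‹k' = 0›; simp only [dig, pow_zero, Nat.div_one]
            exact Nat.mod_eq_of_lt (by have := ha4 i; omega)
          · exact dig_small (lt_of_lt_of_le (by have := ha4 i; omega : a i < 5 ^ 1)
              (Nat.pow_le_pow_right (by norm_num) (by omega)))
        rw [hd 0, hd 1]
        split
        · rw [← hdigtop 0, ← hdigtop 1]; exact h3 M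
        · exact not_bad_00
      refine Set.mem_iUnion₂.2 ⟨fun i => a i + 1, ?_, ?_⟩
      · -- cube mem QcolOf 2 1 (F1 2)
        refine ⟨⟨fun i => a i + 1, fun i => ⟨by show 1 ≤ a i + 1; omega,
          by show a i + 1 ≤ 5 ^ 1; have := ha4 i; norm_num; omega⟩, rfl⟩, ?_⟩
        refine ⟨ctr 2 1 (fun i => a i + 1), obox_subset_interior _ _ _ (ctr_mem_obox _ _ _), ?_⟩
        have := IH 1 (by omega) 1 (fun i => a i + 1) (fun i => by show 1 ≤ a i + 1; omega)
          (fun i => by show a i + 1 ≤ 5 ^ 1; have := ha4 i; norm_num; omega) halla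
        rwa [Fn_two] at this
      · -- image membership
        refine ⟨ctr 2 M r, IH (k+1) (by omega) M r hr1 hr2 hallr, ?_⟩
        ext i
        have hlr : (l i : ℝ) = 5 ^ M * a i + r i := by
          have h' : 5 ^ M * a i + r i = l i := by have := hdiva i; have := h1 i; have := haeq i; have := hreq i; omega
          exact_mod_cast (congrArg (fun n : ℕ => (n:ℝ)) h').symm
        simp only [psi, ctr, PiLp.toLp_apply]
        rw [hlr]
        have h5R : (0:ℝ) < 5 ^ M := by positivity
        push_cast
        field_simp
        ring

lemma Fset_sub_F1 : Fset 2 ⊆ F1 2 := fun x hx => by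
  have := Set.mem_iInter.1 hx 1
  rwa [show Fn 2 1 = F1 2 from rfl] at this

lemma cube_mem_QcolOf {N : ℕ} {l : Fin 2 → ℕ} (h1 : ∀ i, 1 ≤ l i) (h2 : ∀ i, l i ≤ 5 ^ N)
    (h3 : allowed l) : cube 2 N l ∈ QcolOf 2 N (Fset 2) :=
  ⟨⟨l, fun i => ⟨h1 i, h2 i⟩, rfl⟩,
    ⟨ctr 2 N l, obox_subset_interior _ _ _ (ctr_mem_obox _ _ _),
      Set.mem_iInter.2 fun K => centerIn K N l h1 h2 h3⟩⟩

lemma Qcol_finite (d n : ℕ) : (Qcol d n).Finite := by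
  have hfin : ({l : Fin d → ℕ | ∀ i, l i ≤ 5 ^ n}).Finite := by
    have : {l : Fin d → ℕ | ∀ i, l i ≤ 5 ^ n} = Set.pi Set.univ (fun _ => Set.Iic (5 ^ n)) := by
      ext l; simp only [Set.mem_setOf_eq, Set.mem_pi, Set.mem_univ, forall_true_left, Set.mem_Iic]
    rw [this]
    exact Set.Finite.pi fun _ => Set.finite_Iic _
  refine (hfin.image (cube d n)).subset ?_
  rintro Q ⟨l, hl, rfl⟩
  exact ⟨l, fun i => (hl i).2, rfl⟩

lemma QcolOf_finite (d n : ℕ) (A : Set (Pt d)) : (QcolOf d n A).Finite :=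
  (Qcol_finite d n).subset fun _ hQ => hQ.1

noncomputable instance QcolOf.fintype (d n : ℕ) (A : Set (Pt d)) : Fintype ↥(QcolOf d n A) :=
  (QcolOf_finite d n A).fintype

lemma energy_eq_sum (d n : ℕ) (p : ℝ) (f : Set (Pt d) → ℝ) :
    energy d n p f = (1 / 2) * ∑ Q : ↥(QcolOf d n (Fset d)), ∑ Q' : ↥(QcolOf d n (Fset d)),
      if ((Q : Set (Pt d)) ∩ (Q' : Set (Pt d))).Nonempty then |f Q - f Q'| ^ p else 0 := by
  unfold energy
  rw [tsum_fintype]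
  congr 1
  exact Finset.sum_congr rfl fun Q _ => tsum_fintype _

lemma energy_term_nonneg (p : ℝ) (c : Prop) [Decidable c] (x : ℝ) :
    (0:ℝ) ≤ if c then |x| ^ p else 0 := by
  split
  · exact Real.rpow_nonneg (abs_nonneg _) _
  · exact le_refl 0

lemma energy_nonneg (d n : ℕ) (p : ℝ) (f : Set (Pt d) → ℝ) : 0 ≤ energy d n p f := by
  unfold energy
  refine mul_nonneg (by norm_num) (tsum_nonneg fun Q => tsum_nonneg fun Q' => ?_)
  exact energy_term_nonneg p _ _

lemma conduct_bddBelow (d n m : ℕ) (p : ℝ) (A₁ A₂ : Set (Set (Pt d))) :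
    BddBelow {e : ℝ | ∃ f : Set (Pt d) → ℝ,
      (∀ Q ∈ Sm d n m A₁, f Q = 1) ∧ (∀ Q ∈ Sm d n m A₂, f Q = 0) ∧
      e = energy d (n + m) p f} := by
  refine ⟨0, ?_⟩
  rintro e ⟨f, -, -, rfl⟩
  exact energy_nonneg _ _ _ _

lemma conduct_le {d n m : ℕ} {p : ℝ} {A₁ A₂ : Set (Set (Pt d))} {f : Set (Pt d) → ℝ}
    (hf1 : ∀ Q ∈ Sm d n m A₁, f Q = 1) (hf2 : ∀ Q ∈ Sm d n m A₂, f Q = 0) :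
    conduct d n m p A₁ A₂ ≤ energy d (n + m) p f :=
  csInf_le (conduct_bddBelow d n m p A₁ A₂) ⟨f, hf1, hf2, rfl⟩

lemma le_conduct {d n m : ℕ} {p : ℝ} {A₁ A₂ : Set (Set (Pt d))} {b : ℝ}
    (hne : ∃ f : Set (Pt d) → ℝ,
      (∀ Q ∈ Sm d n m A₁, f Q = 1) ∧ (∀ Q ∈ Sm d n m A₂, f Q = 0))
    (hb : ∀ f : Set (Pt d) → ℝ, (∀ Q ∈ Sm d n m A₁, f Q = 1) →
      (∀ Q ∈ Sm d n m A₂, f Q = 0) → b ≤ energy d (n + m) p f) :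
    b ≤ conduct d n m p A₁ A₂ := by
  refine le_csInf ⟨energy d (n+m) p hne.choose, hne.choose, hne.choose_spec.1, hne.choose_spec.2, rfl⟩ ?_
  rintro e ⟨f, hf1, hf2, rfl⟩
  exact hb f hf1 hf2

lemma cube_nonempty {d N : ℕ} (l : Fin d → ℕ) : (cube d N l).Nonempty := ⟨ctr d N l, ctr_mem d N l⟩

lemma Sm_disjoint {n m : ℕ} {Qc : Set (Pt 2)} {Q : Set (Pt 2)}
    (h1 : Q ∈ Sm 2 n m {Qc}) (h2 : Q ∈ Sm 2 n m (GamC 2 n Qc)) : False := by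
  obtain ⟨hQ, Q₁, hQ₁, hsub1⟩ := h1
  obtain ⟨-, Q₂, hQ₂, hsub2⟩ := h2
  rw [Set.mem_singleton_iff] at hQ₁
  subst hQ₁
  obtain ⟨⟨l, -, rfl⟩, -⟩ := hQ
  obtain ⟨hQ₂mem, hQ₂n⟩ := hQ₂
  have hx := ctr_mem 2 (n+m) l
  exact hQ₂n ⟨hQ₂mem, ⟨ctr 2 (n+m) l, hsub2 hx, hsub1 hx⟩⟩

/-- the indicator test function -/
def indf (n m : ℕ) (Qc : Set (Pt 2)) : Set (Pt 2) → ℝ :=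
  fun Q => if Q ∈ Sm 2 n m {Qc} then 1 else 0

lemma indf_adm1 (n m : ℕ) (Qc : Set (Pt 2)) : ∀ Q ∈ Sm 2 n m {Qc}, indf n m Qc Q = 1 :=
  fun Q hQ => if_pos hQ

lemma indf_adm2 (n m : ℕ) (Qc : Set (Pt 2)) :
    ∀ Q ∈ Sm 2 n m (GamC 2 n Qc), indf n m Qc Q = 0 :=
  fun Q hQ => if_neg (fun h => Sm_disjoint h hQ)

lemma Qtwo_eq : Qtwo 2 = cube 2 1 (fun _ => 3) := by
  ext x
  constructor
  · intro h i
    have := h i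
    simp only [Set.mem_Icc] at this
    constructor <;> · push_cast; norm_num; linarith [this.1, this.2]
  · intro h i
    have := h i
    simp only [Set.mem_Icc]
    push_cast at this
    norm_num at this
    exact ⟨by linarith [this.1], by linarith [this.2]⟩

lemma Qtwo_mem_QcolOf : Qtwo 2 ∈ QcolOf 2 1 (Fset 2) := by
  rw [Qtwo_eq]
  refine cube_mem_QcolOf (fun _ => by norm_num) (fun _ => by norm_num) ?_
  intro k
  rcases Nat.eq_zero_or_pos k with hk | hk
  · subst hk
    simp only [dig, pow_zero, Nat.div_one]
    unfold bad; omega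
  · have : dig k (3 - 1) = 0 := dig_small
      (lt_of_lt_of_le (by norm_num) (Nat.pow_le_pow_right (by norm_num) hk))
    rw [this]; exact not_bad_00

lemma mem_Qtwo_iff (x : Pt 2) : x ∈ Qtwo 2 ↔ ∀ i, (2/5 : ℝ) ≤ x i ∧ x i ≤ 3/5 := by
  constructor
  · intro h i; exact h i
  · intro h i; exact h i

lemma keyQtwo {m : ℕ} {Q Q' : Set (Pt 2)}
    (hQ : Q ∈ QcolOf 2 (1+m) (Fset 2)) (hQ' : Q' ∈ QcolOf 2 (1+m) (Fset 2))
    (hsub : Q ⊆ Qtwo 2) (hnsub : ¬ Q' ⊆ Qtwo 2) (hint : (Q ∩ Q').Nonempty) :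
    ∃ bz : Fin 2 → Bool,
      Q = cube 2 (1+m) (fun i => if bz i then 3*5^m else 2*5^m + 1) ∧
      Q' = cube 2 (1+m) (fun i => if bz i then 3*5^m + 1 else 2*5^m) := by
  obtain ⟨⟨l, hl, rfl⟩, -⟩ := hQ
  obtain ⟨⟨l', hl', rfl⟩, hQ'int⟩ := hQ'
  obtain ⟨w, hwQ, hwQ'⟩ := hint
  set N := 1 + m with hN
  have h5R : (0:ℝ) < 5 ^ N := by positivity
  have h5m : (0:ℝ) < 5 ^ m := by positivity
  have hNe : (5:ℝ) ^ N = 5 * 5 ^ m := by rw [hN, pow_add, pow_one]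
  have h1m : (1:ℝ) ≤ 5 ^ m := one_le_pow₀ (by norm_num)
  -- bounds on l from Q ⊆ Qtwo
  have hlb : ∀ i, 2*5^m + 1 ≤ l i ∧ l i ≤ 3*5^m := by
    intro i
    have hmin : (WithLp.toLp 2 (fun j => ((l j : ℝ) - 1)/5^N) : Pt 2) ∈ cube 2 N l := by
      intro j; exact ⟨le_refl _, (div_le_div_iff_of_pos_right h5R).mpr (by linarith)⟩
    have hmax : (WithLp.toLp 2 (fun j => (l j : ℝ)/5^N) : Pt 2) ∈ cube 2 N l := by
      intro j; exact ⟨(div_le_div_iff_of_pos_right h5R).mpr (by linarith), le_refl _⟩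
    have h1 := (hsub hmin) i
    have h2 := (hsub hmax) i
    simp only [PiLp.toLp_apply] at h1 h2
    have hA : (2:ℝ)/5 ≤ ((l i : ℝ) - 1)/5^N := h1.1
    have hB : (l i : ℝ)/5^N ≤ 3/5 := h2.2
    rw [div_le_div_iff₀ h5R (by norm_num)] at hB
    rw [div_le_div_iff₀ (by norm_num) h5R] at hA
    have c1 : (2:ℝ)*5^m + 1 ≤ l i := by nlinarith [hNe]
    have c2 : (l i : ℝ) ≤ 3*5^m := by nlinarith [hNe]
    constructor
    · exact_mod_cast (by push_cast; linarith : ((2*5^m + 1 : ℕ) : ℝ) ≤ l i)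
    · exact_mod_cast (by push_cast; linarith : (l i : ℝ) ≤ ((3*5^m : ℕ) : ℝ))
  -- w is in Qtwo
  have hwT : ∀ i, (2/5:ℝ) ≤ w i ∧ w i ≤ 3/5 := fun i => hsub hwQ i
  -- trichotomy for l'
  have tri : ∀ i, (l' i = 2*5^m ∧ w i = 2/5) ∨ (l' i = 3*5^m + 1 ∧ w i = 3/5) ∨
      (2*5^m + 1 ≤ l' i ∧ l' i ≤ 3*5^m) := by
    intro i
    have hw1 : ((l' i : ℝ) - 1)/5^N ≤ w i := (hwQ' i).1
    have hw2 : w i ≤ (l' i : ℝ)/5^N := (hwQ' i).2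
    have ht := hwT i
    rcases le_or_gt (l' i) (2*5^m) with hc | hc
    · left
      have hcR : (l' i : ℝ) ≤ 2*5^m := by exact_mod_cast hc
      have : w i ≤ 2/5 := by
        calc w i ≤ (l' i : ℝ)/5^N := hw2
        _ ≤ (2*5^m)/5^N := (div_le_div_iff_of_pos_right h5R).mpr hcR
        _ = 2/5 := by rw [hNe]; field_simp
      have hw25 : w i = 2/5 := le_antisymm this ht.1
      -- 2/5 ≤ l' i / 5^N
      have : (2:ℝ)/5 ≤ (l' i : ℝ)/5^N := hw25 ▸ hw2
      rw [div_le_div_iff₀ (by norm_num) h5R] at this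
      have : (2:ℝ)*5^m ≤ l' i := by nlinarith [hNe]
      have : 2*5^m ≤ l' i := by exact_mod_cast (by push_cast; linarith : ((2*5^m:ℕ):ℝ) ≤ l' i)
      exact ⟨le_antisymm hc this, hw25⟩
    rcases le_or_gt (3*5^m + 1) (l' i) with hc2 | hc2
    · right; left
      have hcR : (3:ℝ)*5^m + 1 ≤ l' i := by
        exact_mod_cast (by push_cast; norm_num : ((3*5^m+1:ℕ):ℝ) = 3*5^m+1) ▸ (by exact_mod_cast hc2 : ((3*5^m+1:ℕ):ℝ) ≤ (l' i:ℝ))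
      have : (3:ℝ)/5 ≤ ((l' i:ℝ) - 1)/5^N := by
        rw [le_div_iff₀ h5R, hNe]; nlinarith
      have hw35 : w i = 3/5 := le_antisymm ht.2 (le_trans this hw1)
      -- l' i - 1 ≤ 3*5^m
      have : ((l' i : ℝ) - 1)/5^N ≤ 3/5 := hw35 ▸ hw1
      rw [div_le_div_iff₀ h5R (by norm_num)] at this
      have : (l' i : ℝ) ≤ 3*5^m + 1 := by nlinarith [hNe]
      have : l' i ≤ 3*5^m + 1 := by
        exact_mod_cast (by push_cast; linarith : (l' i : ℝ) ≤ ((3*5^m+1:ℕ):ℝ))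
      exact ⟨le_antisymm this hc2, hw35⟩
    · right; right; omega
  -- mixed case impossible
  have hmix : ∀ i j : Fin 2, i ≠ j → (l' i = 2*5^m ∨ l' i = 3*5^m + 1) →
      (2*5^m + 1 ≤ l' j ∧ l' j ≤ 3*5^m) → False := by
    intro i j hij hext hmid
    obtain ⟨y, hyint, hyF⟩ := hQ'int
    have hyo := interior_subset_obox 2 N l' hyint
    have hyF1 := Fset_sub_F1 hyF
    apply hyF1.2
    refine Set.mem_iUnion.2 ⟨i, ?_⟩
    have hyi : y i ∈ Set.Ioo ((1:ℝ)/5) (2/5) ∪ Set.Ioo ((3:ℝ)/5) (4/5) := by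
      have h1 := (hyo i).1
      have h2 := (hyo i).2
      rcases hext with he | he
      · left
        have hlR : (l' i : ℝ) = 2*5^m := by exact_mod_cast he
        constructor
        · have : (1:ℝ)/5 ≤ ((l' i:ℝ) - 1)/5^N := by
            rw [div_le_div_iff₀ (by norm_num) h5R, hlR, hNe]
            nlinarith [h1m]
          linarith
        · have : (l' i : ℝ)/5^N = 2/5 := by rw [hlR, hNe]; field_simp
          linarith
      · right
        have hlR : (l' i : ℝ) = 3*5^m + 1 := by
          exact_mod_cast (by exact_mod_cast he : (l' i:ℝ) = ((3*5^m+1:ℕ):ℝ))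
        constructor
        · have : ((l' i:ℝ) - 1)/5^N = 3/5 := by rw [hlR, hNe]; field_simp; ring
          linarith
        · have : (l' i : ℝ)/5^N ≤ 4/5 := by
            rw [div_le_div_iff₀ h5R (by norm_num), hlR, hNe]
            nlinarith [h1m]
          linarith
    have hyj : y j ∈ Set.Ioo ((2:ℝ)/5) (3/5) := by
      have h1 := (hyo j).1
      have h2 := (hyo j).2
      have hjl : (2:ℝ)*5^m ≤ (l' j : ℝ) - 1 := by
        have : ((2*5^m+1:ℕ):ℝ) ≤ l' j := by exact_mod_cast hmid.1
        push_cast at this; linarith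
      have hjr : (l' j : ℝ) ≤ 3*5^m := by exact_mod_cast hmid.2
      constructor
      · have : (2:ℝ)/5 ≤ ((l' j:ℝ) - 1)/5^N := by
          rw [div_le_div_iff₀ (by norm_num) h5R, hNe]; nlinarith
        linarith
      · have : (l' j : ℝ)/5^N ≤ 3/5 := by
          rw [div_le_div_iff₀ h5R (by norm_num), hNe]; nlinarith
        linarith
    -- now build membership in the removed set indexed by i
    fin_cases i <;> fin_cases j
    · exact absurd rfl hij
    · refine ⟨?_, hyi, ?_⟩ <;> intro j' hj' <;> fin_cases j'
      · exact absurd hj' (by decide)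
      · exact absurd hj' (by decide)
      · exact absurd hj' (by decide)
      · exact hyj
    · refine ⟨?_, hyi, ?_⟩ <;> intro j' hj' <;> fin_cases j'
      · exact hyj
      · exact absurd hj' (by decide)
      · exact absurd hj' (by decide)
      · exact absurd hj' (by decide)
    · exact absurd rfl hij
  -- both middle impossible
  have hCC : ¬ ((2*5^m + 1 ≤ l' 0 ∧ l' 0 ≤ 3*5^m) ∧ (2*5^m + 1 ≤ l' 1 ∧ l' 1 ≤ 3*5^m)) := by
    rintro ⟨h0, h1⟩
    apply hnsub
    intro x hx i
    have hx1 := (hx i).1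
    have hx2 := (hx i).2
    have hi1 : 2*5^m + 1 ≤ l' i ∧ l' i ≤ 3*5^m := by
      fin_cases i
      · exact h0
      · exact h1
    have hjl : (2:ℝ)*5^m ≤ (l' i : ℝ) - 1 := by
      have : ((2*5^m+1:ℕ):ℝ) ≤ l' i := by exact_mod_cast hi1.1
      push_cast at this; linarith
    have hjr : (l' i : ℝ) ≤ 3*5^m := by exact_mod_cast hi1.2
    have ha : (2:ℝ)/5 ≤ ((l' i:ℝ) - 1)/5^N := by
      rw [div_le_div_iff₀ (by norm_num) h5R, hNe]; nlinarith
    have hb : (l' i : ℝ)/5^N ≤ 3/5 := by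
      rw [div_le_div_iff₀ h5R (by norm_num), hNe]; nlinarith
    simp only [Set.mem_Icc]
    exact ⟨by linarith, by linarith⟩
  -- determine l from w
  have hlA : ∀ i, w i = 2/5 → l i = 2*5^m + 1 := by
    intro i hw
    have h1 := (hwQ i).1
    rw [hw] at h1
    rw [div_le_div_iff₀ h5R (by norm_num)] at h1
    have : (l i : ℝ) ≤ 2*5^m + 1 := by nlinarith [hNe]
    have hle : l i ≤ 2*5^m + 1 := by
      exact_mod_cast (by push_cast; linarith : (l i:ℝ) ≤ ((2*5^m+1:ℕ):ℝ))
    have := (hlb i).1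
    omega
  have hlB : ∀ i, w i = 3/5 → l i = 3*5^m := by
    intro i hw
    have h2 := (hwQ i).2
    rw [hw] at h2
    rw [div_le_div_iff₀ (by norm_num) h5R] at h2
    have : (3:ℝ)*5^m ≤ l i := by nlinarith [hNe]
    have hge : 3*5^m ≤ l i := by
      exact_mod_cast (by push_cast; linarith : ((3*5^m:ℕ):ℝ) ≤ (l i:ℝ))
    have := (hlb i).2
    omega
  rcases tri 0 with ⟨e0, w0⟩ | ⟨e0, w0⟩ | c0 <;> rcases tri 1 with ⟨e1, w1⟩ | ⟨e1, w1⟩ | c1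
  · refine ⟨![false, false], ?_, ?_⟩
    · refine congrArg _ (funext fun i => ?_)
      fin_cases i <;> simp [hlA 0 w0, hlA 1 w1]
    · refine congrArg _ (funext fun i => ?_)
      fin_cases i <;> simp [e0, e1]
  · refine ⟨![false, true], ?_, ?_⟩
    · refine congrArg _ (funext fun i => ?_)
      fin_cases i <;> simp [hlA 0 w0, hlB 1 w1]
    · refine congrArg _ (funext fun i => ?_)
      fin_cases i <;> simp [e0, e1]
  · exact (hmix 0 1 (by decide) (Or.inl e0) c1).elim
  · refine ⟨![true, false], ?_, ?_⟩
    · refine congrArg _ (funext fun i => ?_)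
      fin_cases i <;> simp [hlB 0 w0, hlA 1 w1]
    · refine congrArg _ (funext fun i => ?_)
      fin_cases i <;> simp [e0, e1]
  · refine ⟨![true, true], ?_, ?_⟩
    · refine congrArg _ (funext fun i => ?_)
      fin_cases i <;> simp [hlB 0 w0, hlB 1 w1]
    · refine congrArg _ (funext fun i => ?_)
      fin_cases i <;> simp [e0, e1]
  · exact (hmix 0 1 (by decide) (Or.inr e0) c1).elim
  · exact (hmix 1 0 (by decide) (Or.inl e1) c0).elim
  · exact (hmix 1 0 (by decide) (Or.inr e1) c0).elim
  · exact (hCC ⟨c0, c1⟩).elim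

lemma indf_val (n m : ℕ) (Qc : Set (Pt 2)) (Q : Set (Pt 2)) :
    indf n m Qc Q = 1 ∨ indf n m Qc Q = 0 := by
  unfold indf; split
  · exact Or.inl rfl
  · exact Or.inr rfl

lemma indf_one {n m : ℕ} {Qc Q : Set (Pt 2)} (h : indf n m Qc Q = 1) : Q ∈ Sm 2 n m {Qc} := by
  by_contra hc
  rw [indf, if_neg hc] at h
  norm_num at h

lemma indf_zero {n m : ℕ} {Qc Q : Set (Pt 2)} (h : indf n m Qc Q = 0) : Q ∉ Sm 2 n m {Qc} := by
  intro hc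
  rw [indf, if_pos hc] at h
  norm_num at h

def cin (m : ℕ) (bz : Fin 2 → Bool) : Set (Pt 2) :=
  cube 2 (1+m) (fun i => if bz i then 3*5^m else 2*5^m + 1)

def cout (m : ℕ) (bz : Fin 2 → Bool) : Set (Pt 2) :=
  cube 2 (1+m) (fun i => if bz i then 3*5^m + 1 else 2*5^m)

def pairOf (m : ℕ) (c : Bool × (Fin 2 → Bool)) : Set (Pt 2) × Set (Pt 2) :=
  if c.1 then (cin m c.2, cout m c.2) else (cout m c.2, cin m c.2)

lemma conduct_Qtwo_le (m : ℕ) (p : ℝ) (hp1 : 1 < p) :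
    conduct 2 1 m p {Qtwo 2} (GamC 2 1 (Qtwo 2)) ≤ 4 := by
  have hp0 : p ≠ 0 := by linarith
  have hppos : (0:ℝ) ≤ p := by linarith
  refine le_trans (conduct_le (indf_adm1 1 m (Qtwo 2)) (indf_adm2 1 m (Qtwo 2))) ?_
  rw [energy_eq_sum]
  set S := QcolOf 2 (1 + m) (Fset 2) with hS
  set f := indf 1 m (Qtwo 2) with hf
  set F : ↥S × ↥S → ℝ := fun x =>
    if ((x.1 : Set (Pt 2)) ∩ (x.2 : Set (Pt 2))).Nonempty then |f x.1 - f x.2| ^ p else 0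
    with hF
  have hsum : (∑ Q : ↥S, ∑ Q' : ↥S,
      if ((Q : Set (Pt 2)) ∩ (Q' : Set (Pt 2))).Nonempty then |f Q - f Q'| ^ p else 0)
      = ∑ x ∈ Finset.univ ×ˢ Finset.univ, F x := by
    rw [Finset.sum_product]
  have hle1 : ∀ x : ↥S × ↥S, F x ≤ 1 := by
    intro x
    rw [hF]
    dsimp only
    split
    · refine Real.rpow_le_one (abs_nonneg _) ?_ hppos
      rcases indf_val 1 m (Qtwo 2) x.1 with h1 | h1 <;>
        rcases indf_val 1 m (Qtwo 2) x.2 with h2 | h2 <;>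
          rw [← hf] at h1 h2 <;> rw [h1, h2] <;> norm_num
    · norm_num
  classical
  set Good : ↥S × ↥S → Prop := fun x => ∃ c : Bool × (Fin 2 → Bool),
      ((x.1 : Set (Pt 2)), (x.2 : Set (Pt 2))) = pairOf m c with hGoodDef
  have hGood : ∀ x : ↥S × ↥S, F x ≠ 0 → Good x := by
    intro x hx
    have hne : ((x.1 : Set (Pt 2)) ∩ (x.2 : Set (Pt 2))).Nonempty := by
      by_contra hc
      exact hx (by rw [hF]; exact if_neg hc)
    have hdiff : f x.1 ≠ f x.2 := by
      intro hc
      apply hx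
      rw [hF]
      dsimp only
      rw [if_pos hne, hc, sub_self, abs_zero, Real.zero_rpow hp0]
    rcases indf_val 1 m (Qtwo 2) x.1 with h1 | h1 <;>
      rcases indf_val 1 m (Qtwo 2) x.2 with h2 | h2
    · exact absurd (by rw [← hf] at h1 h2; rw [h1, h2]) hdiff
    · -- x.1 ∈ Sm, x.2 ∉ Sm
      have hin := indf_one h1
      have hout := indf_zero h2
      have hsub : (x.1 : Set (Pt 2)) ⊆ Qtwo 2 := by
        obtain ⟨-, Q'', hQ'', hsub⟩ := hin
        rw [Set.mem_singleton_iff] at hQ''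
        rwa [hQ''] at hsub
      have hnsub : ¬ (x.2 : Set (Pt 2)) ⊆ Qtwo 2 := by
        intro hc
        exact hout ⟨x.2.2, Qtwo 2, Set.mem_singleton _, hc⟩
      obtain ⟨bz, hc1, hc2⟩ := keyQtwo x.1.2 x.2.2 hsub hnsub hne
      refine ⟨(true, bz), ?_⟩
      simp only [pairOf, if_true]
      rw [Prod.mk.injEq]
      exact ⟨by rw [cin]; exact hc1, by rw [cout]; exact hc2⟩
    · -- symmetric
      have hin := indf_one h2
      have hout := indf_zero h1
      have hsub : (x.2 : Set (Pt 2)) ⊆ Qtwo 2 := by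
        obtain ⟨-, Q'', hQ'', hsub⟩ := hin
        rw [Set.mem_singleton_iff] at hQ''
        rwa [hQ''] at hsub
      have hnsub : ¬ (x.1 : Set (Pt 2)) ⊆ Qtwo 2 := by
        intro hc
        exact hout ⟨x.1.2, Qtwo 2, Set.mem_singleton _, hc⟩
      have hne' : ((x.2 : Set (Pt 2)) ∩ (x.1 : Set (Pt 2))).Nonempty := by
        rwa [Set.inter_comm]
      obtain ⟨bz, hc1, hc2⟩ := keyQtwo x.2.2 x.1.2 hsub hnsub hne'
      refine ⟨(false, bz), ?_⟩
      simp only [pairOf, Bool.false_eq_true, if_false]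
      rw [Prod.mk.injEq]
      exact ⟨by rw [cout]; exact hc2, by rw [cin]; exact hc1⟩
    · exact absurd (by rw [← hf] at h1 h2; rw [h1, h2]) hdiff
  set enc : ↥S × ↥S → Bool × (Fin 2 → Bool) := fun x =>
    if h : Good x then h.choose else (false, fun _ => false)
    with hencDef
  have hinj : Set.InjOn enc ((Finset.univ ×ˢ Finset.univ).filter (fun x => F x ≠ 0) : Finset _) := by
    intro x1 hx1 x2 hx2 heq
    simp only [Finset.coe_filter, Set.mem_setOf_eq] at hx1 hx2
    have hG1 := hGood x1 hx1.2
    have hG2 := hGood x2 hx2.2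
    rw [hencDef] at heq
    dsimp only at heq
    rw [dif_pos hG1, dif_pos hG2] at heq
    have s1 := hG1.choose_spec
    have s2 := hG2.choose_spec
    have e : ((x1.1 : Set (Pt 2)), (x1.2 : Set (Pt 2)))
        = ((x2.1 : Set (Pt 2)), (x2.2 : Set (Pt 2))) :=
      s1.trans ((congrArg (pairOf m) heq).trans s2.symm)
    rw [Prod.mk.injEq] at e
    exact Prod.ext (Subtype.ext e.1) (Subtype.ext e.2)
  have hcard : ((Finset.univ ×ˢ Finset.univ).filter (fun x => F x ≠ 0)).card ≤ 8 := by
    have := Finset.card_le_card_of_injOn enc (fun x _ => Finset.mem_univ _) hinj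
    refine le_trans this ?_
    rw [Finset.card_univ]
    simp only [Fintype.card_prod, Fintype.card_bool, Fintype.card_fun]
    norm_num
  rw [hsum, ← Finset.sum_filter_ne_zero]
  have hsum_le : (∑ x ∈ (Finset.univ ×ˢ Finset.univ).filter (fun x => F x ≠ 0), F x)
      ≤ ((Finset.univ ×ˢ Finset.univ).filter (fun x => F x ≠ 0)).card • (1:ℝ) :=
    Finset.sum_le_card_nsmul _ _ 1 (fun x _ => hle1 x)
  rw [nsmul_eq_mul, mul_one] at hsum_le
  have : (((Finset.univ ×ˢ Finset.univ).filter (fun x => F x ≠ 0)).card : ℝ) ≤ 8 := by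
    exact_mod_cast hcard
  linarith

/-- telescoping -/
lemma tele (g : ℕ → ℝ) : ∀ K, |g 0 - g K| ≤ ∑ j ∈ Finset.range K, |g j - g (j+1)| := by
  intro K
  induction K with
  | zero => simp
  | succ K ih =>
      rw [Finset.sum_range_succ]
      calc |g 0 - g (K+1)| ≤ |g 0 - g K| + |g K - g (K+1)| := abs_sub_le _ _ _
      _ ≤ _ := by linarith

lemma chain_lower {p : ℝ} (hp1 : 1 < p) (K : ℕ) (hK : 0 < K) (g : ℕ → ℝ)
    (h0 : g 0 = 1) (hK0 : g K = 0) :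
    (K:ℝ) ^ (1-p) ≤ ∑ j ∈ Finset.range K, |g j - g (j+1)| ^ p := by
  have hKR : (0:ℝ) < K := by exact_mod_cast hK
  have hge1 : (1:ℝ) ≤ ∑ j ∈ Finset.range K, |g j - g (j+1)| := by
    have := tele g K
    rw [h0, hK0] at this
    simpa using this
  have hmean := Real.rpow_arith_mean_le_arith_mean_rpow (Finset.range K)
    (fun _ => (K:ℝ)⁻¹) (fun j => |g j - g (j+1)|)
    (fun i _ => by positivity)
    (by rw [Finset.sum_const, Finset.card_range, nsmul_eq_mul]
        field_simp)
    (fun i _ => abs_nonneg _) hp1.le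
  have hlhs : ((K:ℝ)⁻¹) ^ p ≤ ∑ i ∈ Finset.range K, (K:ℝ)⁻¹ * |g i - g (i+1)| ^ p := by
    refine le_trans ?_ hmean
    have h1 : (K:ℝ)⁻¹ = (K:ℝ)⁻¹ * 1 := by ring
    calc ((K:ℝ)⁻¹) ^ p = ((K:ℝ)⁻¹ * 1) ^ p := by rw [← h1]
    _ ≤ (∑ i ∈ Finset.range K, (K:ℝ)⁻¹ * |g i - g (i+1)|) ^ p := by
        refine Real.rpow_le_rpow (by positivity) ?_ (by linarith)
        rw [← Finset.mul_sum]
        have : (0:ℝ) < (K:ℝ)⁻¹ := by positivity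
        nlinarith
  rw [← Finset.mul_sum] at hlhs
  have hfin : (K:ℝ) * ((K:ℝ)⁻¹) ^ p ≤ ∑ j ∈ Finset.range K, |g j - g (j+1)| ^ p := by
    have h2 : (K:ℝ) * (((K:ℝ)⁻¹) ^ p) ≤ (K:ℝ) * ((K:ℝ)⁻¹ *
        ∑ i ∈ Finset.range K, |g i - g (i+1)| ^ p) := by
      exact mul_le_mul_of_nonneg_left hlhs hKR.le
    have h3 : (K:ℝ) * ((K:ℝ)⁻¹ * ∑ i ∈ Finset.range K, |g i - g (i+1)| ^ p)
        = ∑ i ∈ Finset.range K, |g i - g (i+1)| ^ p := by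
      field_simp
    linarith
  refine le_trans (le_of_eq ?_) hfin
  rw [Real.inv_rpow hKR.le, Real.rpow_sub hKR, Real.rpow_one]
  field_simp

/-- digit function of a row pattern -/
def rowc (m : ℕ) (s : Fin m → Bool) : ℕ → ℕ :=
  fun k => if h : k < m then cond (s ⟨k, h⟩) 4 0 else 0

lemma rowc_le4 (m s) : ∀ k, rowc m s k ≤ 4 := by
  intro k; unfold rowc; split
  · cases s ⟨k, ‹k < m›⟩ <;> simp
  · norm_num

/-- row index -/
def rIdx (m : ℕ) (s : Fin m → Bool) : ℕ := 1 + ∑ k ∈ Finset.range m, rowc m s k * 5 ^ k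

lemma rIdx_ge1 (m s) : 1 ≤ rIdx m s := Nat.le_add_right _ _

lemma rIdx_le (m s) : rIdx m s ≤ 5 ^ m := by
  have := valsum_lt (rowc m s) (rowc_le4 m s) m
  unfold rIdx; omega

lemma rIdx_dig (m : ℕ) (s : Fin m → Bool) (k : ℕ) :
    dig k (rIdx m s - 1) = if h : k < m then cond (s ⟨k, h⟩) 4 0 else 0 := by
  have h1 : rIdx m s - 1 = ∑ k ∈ Finset.range m, rowc m s k * 5 ^ k := by
    unfold rIdx; omega
  rw [h1]
  split
  · rw [valsum_dig (rowc m s) (rowc_le4 m s) m k ‹k < m›]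
    unfold rowc
    rw [dif_pos ‹k < m›]
  · exact dig_small (lt_of_lt_of_le (valsum_lt _ (rowc_le4 m s) m)
      (Nat.pow_le_pow_right (by norm_num) (by omega)))

lemma rIdx_inj (m : ℕ) {s s' : Fin m → Bool} (h : rIdx m s = rIdx m s') : s = s' := by
  funext k
  have h1 := rIdx_dig m s k.val
  have h2 := rIdx_dig m s' k.val
  rw [h] at h1
  rw [h1, dif_pos k.isLt, dif_pos k.isLt] at h2
  have : s ⟨k.val, k.isLt⟩ = s' ⟨k.val, k.isLt⟩ := by
    cases hs : s ⟨k.val, k.isLt⟩ <;> cases hs' : s' ⟨k.val, k.isLt⟩ <;>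
      rw [hs, hs'] at h2 <;> simp_all
  simpa using this

/-- the path cube: x-index `l`, y-index `rIdx m s`, at level `1+m` -/
def pidx (m : ℕ) (s : Fin m → Bool) (l : ℕ) : Fin 2 → ℕ :=
  fun i => if i.val = 0 then l else rIdx m s

def pcube (m : ℕ) (s : Fin m → Bool) (l : ℕ) : Set (Pt 2) := cube 2 (1+m) (pidx m s l)

lemma pcube_mem (m : ℕ) (s : Fin m → Bool) {l : ℕ} (h1 : 1 ≤ l) (h2 : l ≤ 5 ^ (1+m)) :
    pcube m s l ∈ QcolOf 2 (1+m) (Fset 2) := by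
  refine cube_mem_QcolOf ?_ ?_ ?_
  · intro i; unfold pidx; split
    · exact h1
    · exact rIdx_ge1 m s
  · intro i; unfold pidx; split
    · exact h2
    · exact le_trans (rIdx_le m s) (Nat.pow_le_pow_right (by norm_num) (by omega))
  · intro k
    have hp0 : pidx m s l 0 = l := rfl
    have hp1 : pidx m s l 1 = rIdx m s := rfl
    rw [hp0, hp1, rIdx_dig]
    apply not_bad_04
    split
    · cases s ⟨k, ‹k < m›⟩ <;> simp
    · left; rfl

/-- corner cube at level 1 -/
def Qone1 : Set (Pt 2) := cube 2 1 (fun _ => 1)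

lemma Qone1_mem : Qone1 ∈ QcolOf 2 1 (Fset 2) := by
  refine cube_mem_QcolOf (fun _ => le_refl 1) (fun _ => by norm_num) ?_
  intro k
  simp only [Nat.sub_self]
  rw [show dig k 0 = 0 from dig_small (by positivity)]
  exact not_bad_00

/-- the far cube at level 1 -/
def Qthree : Set (Pt 2) := cube 2 1 (fun i => if i.val = 0 then 3 else 1)

lemma Qthree_mem : Qthree ∈ QcolOf 2 1 (Fset 2) := by
  refine cube_mem_QcolOf ?_ ?_ ?_
  · intro i; split <;> norm_num
  · intro i; split <;> norm_num
  · intro k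
    have hp0 : (fun i : Fin 2 => if i.val = 0 then 3 else 1) 0 = 3 := rfl
    have hp1 : (fun i : Fin 2 => if i.val = 0 then 3 else 1) 1 = 1 := rfl
    rw [hp0, hp1]
    simp only [Nat.sub_self]
    rw [show dig k 0 = 0 from dig_small (by positivity)]
    exact not_bad_04 (Or.inl rfl)

lemma Qthree_in_GamC : Qthree ∈ GamC 2 1 Qone1 := by
  refine ⟨Qthree_mem, ?_⟩
  rintro ⟨-, x, hx3, hx1⟩
  have h3 := (hx3 0).1
  have h1 := (hx1 0).2
  simp only [Qthree, Qone1, cube] at h3 h1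
  norm_num at h3 h1
  linarith

lemma pcube_sub_helper {m : ℕ} {s : Fin m → Bool} {l : ℕ} {x : Pt 2}
    (hx : x ∈ pcube m s l) :
    ((l:ℝ) - 1)/5^(1+m) ≤ x 0 ∧ x 0 ≤ (l:ℝ)/5^(1+m) ∧
    ((rIdx m s : ℝ) - 1)/5^(1+m) ≤ x 1 ∧ x 1 ≤ (rIdx m s : ℝ)/5^(1+m) := by
  have h0 := hx 0
  have h1 := hx 1
  have e0 : pidx m s l 0 = l := rfl
  have e1 : pidx m s l 1 = rIdx m s := rfl
  rw [e0] at h0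
  rw [e1] at h1
  exact ⟨h0.1, h0.2, h1.1, h1.2⟩

lemma pcube_left_mem_Sm (m : ℕ) (s : Fin m → Bool) :
    pcube m s (5 ^ m) ∈ Sm 2 1 m {Qone1} := by
  have h5m : (1:ℕ) ≤ 5 ^ m := Nat.one_le_pow _ _ (by norm_num)
  refine ⟨pcube_mem m s h5m (by rw [pow_add, pow_one]; omega), Qone1, Set.mem_singleton _, ?_⟩
  intro x hx
  obtain ⟨ha, hb, hc, hd⟩ := pcube_sub_helper hx
  have hNe : (5:ℝ)^(1+m) = 5 * 5^m := by rw [pow_add, pow_one]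
  have h5R : (0:ℝ) < 5^(1+m) := by positivity
  have h5mR : (0:ℝ) < 5^m := by positivity
  have h1m : (1:ℝ) ≤ 5^m := one_le_pow₀ (by norm_num)
  have hr1 : (1:ℝ) ≤ rIdx m s := by exact_mod_cast rIdx_ge1 m s
  have hr2 : ((rIdx m s : ℝ)) ≤ 5^m := by exact_mod_cast rIdx_le m s
  have h5mN : ((5^m : ℕ) : ℝ) = 5^m := by push_cast; ring
  rw [h5mN] at ha hb
  have haux1 : (0:ℝ) ≤ ((5:ℝ)^m - 1)/5^(1+m) := div_nonneg (by linarith) h5R.le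
  have haux2 : (0:ℝ) ≤ ((rIdx m s : ℝ) - 1)/5^(1+m) := div_nonneg (by linarith) h5R.le
  have hup0 : (5:ℝ)^m/5^(1+m) ≤ 1/5 := by
    rw [div_le_div_iff₀ h5R (by norm_num), hNe]; nlinarith
  have hup1 : ((rIdx m s : ℝ))/5^(1+m) ≤ 1/5 := by
    rw [div_le_div_iff₀ h5R (by norm_num), hNe]; nlinarith
  intro i
  show (((1:ℕ):ℝ) - 1)/5^1 ≤ x i ∧ x i ≤ ((1:ℕ):ℝ)/5^1
  norm_num
  fin_cases i
  · exact ⟨le_trans haux1 ha, le_trans hb hup0⟩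
  · exact ⟨le_trans haux2 hc, le_trans hd hup1⟩

lemma pcube_right_mem_Sm (m : ℕ) (s : Fin m → Bool) :
    pcube m s (2 * 5 ^ m + 1) ∈ Sm 2 1 m (GamC 2 1 Qone1) := by
  have h5m : (1:ℕ) ≤ 5 ^ m := Nat.one_le_pow _ _ (by norm_num)
  refine ⟨pcube_mem m s (by omega) (by rw [pow_add, pow_one]; omega), Qthree, Qthree_in_GamC, ?_⟩
  intro x hx
  obtain ⟨ha, hb, hc, hd⟩ := pcube_sub_helper hx
  have hNe : (5:ℝ)^(1+m) = 5 * 5^m := by rw [pow_add, pow_one]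
  have h5R : (0:ℝ) < 5^(1+m) := by positivity
  have h5mR : (0:ℝ) < 5^m := by positivity
  have h1m : (1:ℝ) ≤ 5^m := one_le_pow₀ (by norm_num)
  have hr1 : (1:ℝ) ≤ rIdx m s := by exact_mod_cast rIdx_ge1 m s
  have hr2 : ((rIdx m s : ℝ)) ≤ 5^m := by exact_mod_cast rIdx_le m s
  have hln : ((2 * 5^m + 1 : ℕ) : ℝ) = 2*5^m + 1 := by push_cast; ring
  rw [hln] at ha hb
  have haux2 : (0:ℝ) ≤ ((rIdx m s : ℝ) - 1)/5^(1+m) := div_nonneg (by linarith) h5R.le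
  have hup1 : ((rIdx m s : ℝ))/5^(1+m) ≤ 1/5 := by
    rw [div_le_div_iff₀ h5R (by norm_num), hNe]; nlinarith
  have hlo : (2:ℝ)/5 ≤ (2*5^m + 1 - 1)/5^(1+m) := by
    rw [div_le_div_iff₀ (by norm_num) h5R, hNe]; nlinarith
  have hup : (2*5^m + 1 : ℝ)/5^(1+m) ≤ 3/5 := by
    rw [div_le_div_iff₀ h5R (by norm_num), hNe]; nlinarith
  intro i
  fin_cases i
  · show (((3:ℕ):ℝ) - 1)/5^1 ≤ x 0 ∧ x 0 ≤ ((3:ℕ):ℝ)/5^1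
    norm_num
    exact ⟨by linarith [le_trans hlo ha], le_trans hb (by norm_num at hup ⊢; linarith)⟩
  · show (((1:ℕ):ℝ) - 1)/5^1 ≤ x 1 ∧ x 1 ≤ ((1:ℕ):ℝ)/5^1
    norm_num
    exact ⟨le_trans haux2 hc, le_trans hd (by norm_num at hup1 ⊢; linarith)⟩

lemma pcube_adj (m : ℕ) (s : Fin m → Bool) (l : ℕ) (hl : 1 ≤ l) :
    (pcube m s l ∩ pcube m s (l+1)).Nonempty := by
  have h5R : (0:ℝ) < 5^(1+m) := by positivity
  refine ⟨WithLp.toLp 2 (fun i => if i.val = 0 then (l:ℝ)/5^(1+m) else ((rIdx m s : ℝ) - 1/2)/5^(1+m)), ?_, ?_⟩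
  · intro i
    unfold pidx
    by_cases hi : i.val = 0
    · simp only [PiLp.toLp_apply, hi, if_true]
      exact ⟨by gcongr <;> norm_num, le_refl _⟩
    · simp only [PiLp.toLp_apply, hi, if_false]
      constructor <;> · gcongr <;> norm_num
  · intro i
    unfold pidx
    by_cases hi : i.val = 0
    · simp only [PiLp.toLp_apply, hi, if_true]
      constructor
      · push_cast; gcongr <;> norm_num
      · push_cast; gcongr <;> norm_num
    · simp only [PiLp.toLp_apply, hi, if_false]
      constructor <;> · gcongr <;> norm_num

set_option maxHeartbeats 1000000 in
lemma conduct_Qone_ge (m : ℕ) (p : ℝ) (hp1 : 1 < p) :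
    (1/2 : ℝ) * 2^m * ((5^m + 1 : ℕ):ℝ)^(1-p) ≤ conduct 2 1 m p {Qone1} (GamC 2 1 Qone1) := by
  classical
  refine le_conduct ⟨indf 1 m Qone1, indf_adm1 1 m Qone1, indf_adm2 1 m Qone1⟩ ?_
  intro f hf1 hf2
  rw [energy_eq_sum]
  set S := QcolOf 2 (1 + m) (Fset 2) with hS
  set F : ↥S × ↥S → ℝ := fun x =>
    if ((x.1 : Set (Pt 2)) ∩ (x.2 : Set (Pt 2))).Nonempty then |f x.1 - f x.2| ^ p else 0
    with hF
  have hFnn : ∀ x, 0 ≤ F x := by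
    intro x; rw [hF]; dsimp only; split
    · exact Real.rpow_nonneg (abs_nonneg _) _
    · exact le_refl 0
  have h5m1 : (1:ℕ) ≤ 5^m := Nat.one_le_pow _ _ (by norm_num)
  have hbound : ∀ j : Fin (5^m + 1), 5^m + j.val + 1 ≤ 5^(1+m) := by
    intro j
    have := j.isLt
    rw [pow_add, pow_one]
    omega
  have hmem1 : ∀ (s : Fin m → Bool) (j : Fin (5^m + 1)),
      pcube m s (5^m + j.val) ∈ S := fun s j =>
    pcube_mem m s (by omega) (by have := hbound j; omega)
  have hmem2 : ∀ (s : Fin m → Bool) (j : Fin (5^m + 1)),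
      pcube m s (5^m + j.val + 1) ∈ S := fun s j =>
    pcube_mem m s (by omega) (hbound j)
  set emap : (Fin m → Bool) × Fin (5^m + 1) → ↥S × ↥S := fun sj =>
    (⟨pcube m sj.1 (5^m + sj.2.val), hmem1 sj.1 sj.2⟩,
     ⟨pcube m sj.1 (5^m + sj.2.val + 1), hmem2 sj.1 sj.2⟩) with hemap
  have hinj : ∀ x ∈ (Finset.univ : Finset ((Fin m → Bool) × Fin (5^m + 1))),
      ∀ y ∈ Finset.univ, emap x = emap y → x = y := by
    intro x _ y _ hxy
    rw [hemap] at hxy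
    dsimp only at hxy
    rw [Prod.mk.injEq] at hxy
    have h1 : pcube m x.1 (5^m + x.2.val) = pcube m y.1 (5^m + y.2.val) :=
      Subtype.ext_iff.1 hxy.1
    have h2 := cube_inj h1
    have e0x : pidx m x.1 (5^m + x.2.val) 0 = 5^m + x.2.val := rfl
    have e0y : pidx m y.1 (5^m + y.2.val) 0 = 5^m + y.2.val := rfl
    have e1x : pidx m x.1 (5^m + x.2.val) 1 = rIdx m x.1 := rfl
    have e1y : pidx m y.1 (5^m + y.2.val) 1 = rIdx m y.1 := rfl
    have hj : 5^m + x.2.val = 5^m + y.2.val := by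
      rw [← e0x, ← e0y, h2]
    have hs : rIdx m x.1 = rIdx m y.1 := by
      rw [← e1x, ← e1y, h2]
    have hs' : x.1 = y.1 := rIdx_inj m hs
    have hj' : x.2 = y.2 := Fin.ext (by omega)
    exact Prod.ext hs' hj'
  have hKR : (0:ℝ) < ((5^m + 1 : ℕ):ℝ) := by positivity
  -- main estimate
  have hdouble : (∑ Q : ↥S, ∑ Q' : ↥S,
      if ((Q : Set (Pt 2)) ∩ (Q' : Set (Pt 2))).Nonempty then |f Q - f Q'| ^ p else 0)
      = ∑ x : ↥S × ↥S, F x := by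
    rw [Fintype.sum_prod_type]
  have hstep1 : (∑ x ∈ Finset.univ.image emap, F x) ≤ ∑ x : ↥S × ↥S, F x :=
    Finset.sum_le_sum_of_subset_of_nonneg (Finset.subset_univ _)
      (fun x _ _ => hFnn x)
  have hstep2 : (∑ x ∈ Finset.univ.image emap, F x)
      = ∑ sj : (Fin m → Bool) × Fin (5^m + 1), F (emap sj) :=
    Finset.sum_image hinj
  have hchain : ∀ s : Fin m → Bool,
      ((5^m + 1 : ℕ):ℝ)^(1-p) ≤ ∑ j : Fin (5^m + 1), F (emap (s, j)) := by
    intro s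
    set g : ℕ → ℝ := fun j => f (pcube m s (5^m + j)) with hg
    have hFg : ∀ j : Fin (5^m + 1), F (emap (s, j)) = |g j.val - g (j.val + 1)| ^ p := by
      intro j
      rw [hemap, hF]
      dsimp only
      rw [if_pos (pcube_adj m s (5^m + j.val) (by omega))]
      rfl
    have hsum_eq : (∑ j : Fin (5^m + 1), F (emap (s, j)))
        = ∑ j ∈ Finset.range (5^m + 1), |g j - g (j+1)| ^ p := by
      rw [← Fin.sum_univ_eq_sum_range (fun j => |g j - g (j+1)| ^ p) (5^m + 1)]
      exact Finset.sum_congr rfl fun j _ => hFg j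
    rw [hsum_eq]
    have hg0 : g 0 = 1 := by
      rw [hg]
      dsimp only
      rw [Nat.add_zero]
      exact hf1 _ (pcube_left_mem_Sm m s)
    have hgK : g (5^m + 1) = 0 := by
      rw [hg]
      dsimp only
      rw [show 5^m + (5^m + 1) = 2 * 5^m + 1 by ring]
      exact hf2 _ (pcube_right_mem_Sm m s)
    have := chain_lower hp1 (5^m + 1) (by omega) g hg0 hgK
    calc ((5^m + 1 : ℕ):ℝ)^(1-p) = ((5^m + 1 : ℕ):ℝ)^(1-p) := rfl
    _ ≤ _ := by
        refine le_trans (le_of_eq ?_) this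
        norm_num
  have hstep3 : ((2:ℝ)^m) * ((5^m + 1 : ℕ):ℝ)^(1-p)
      ≤ ∑ sj : (Fin m → Bool) × Fin (5^m + 1), F (emap sj) := by
    rw [Fintype.sum_prod_type]
    have : ∀ s : Fin m → Bool, ((5^m + 1 : ℕ):ℝ)^(1-p) ≤ ∑ j, F (emap (s, j)) := hchain
    calc ((2:ℝ)^m) * ((5^m + 1 : ℕ):ℝ)^(1-p)
        = ∑ _s : Fin m → Bool, ((5^m + 1 : ℕ):ℝ)^(1-p) := by
          rw [Finset.sum_const, Finset.card_univ]
          simp only [Fintype.card_fun, Fintype.card_bool, Fintype.card_fin, nsmul_eq_mul]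
          push_cast
          ring
    _ ≤ _ := Finset.sum_le_sum fun s _ => this s
  rw [hdouble]
  have hfinal : ((2:ℝ)^m) * ((5^m + 1 : ℕ):ℝ)^(1-p) ≤ ∑ x : ↥S × ↥S, F x :=
    le_trans hstep3 (by rw [← hstep2] at *; exact hstep1)
  nlinarith [hfinal]


end

open Filter in
/-- Failure of property (A_p) for `F⁽²⁾` for `1 < p < log 10 / log 5`. -/
theorem statement0 (p : ℝ) (hp1 : 1 < p) (hp2 : p < Real.log 10 / Real.log 5) :
    ¬ ∃ σ c₁ c₂ : ℝ, 0 < σ ∧ 0 < c₁ ∧ 0 < c₂ ∧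
      ∀ (n m : ℕ), 1 ≤ n → ∀ Q ∈ QcolOf 2 n (Fset 2),
        c₁ * σ ^ (-(m : ℝ)) ≤ conduct 2 n m p {Q} (GamC 2 n Q) ∧
        conduct 2 n m p {Q} (GamC 2 n Q) ≤ c₂ * σ ^ (-(m : ℝ)) := by
  rintro ⟨σ, c₁, c₂, hσ, hc₁, hc₂, H⟩
  -- Step 1 : σ ≥ 1, using the center cube
  have hσ1 : 1 ≤ σ := by
    by_contra hcon
    push_neg at hcon
    have hinv : 1 < 1/σ := by rw [lt_div_iff₀ hσ]; linarith
    obtain ⟨mm, hmm⟩ := pow_unbounded_of_one_lt (4/c₁) hinv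
    have hH := H 1 mm (le_refl 1) (Qtwo 2) Qtwo_mem_QcolOf
    have hle4 : c₁ * σ ^ (-(mm:ℝ)) ≤ 4 := le_trans hH.1 (conduct_Qtwo_le mm p hp1)
    have hrw : σ ^ (-(mm:ℝ)) = (1/σ)^mm := by
      rw [Real.rpow_neg hσ.le, Real.rpow_natCast, one_div, inv_pow]
    rw [hrw] at hle4
    rw [div_lt_iff₀ hc₁] at hmm
    nlinarith [hle4, hmm]
  -- Step 2 : the growth rate
  have hlog5 : (0:ℝ) < Real.log 5 := Real.log_pos (by norm_num)
  have hkey : (p - 1) * Real.log 5 < Real.log 2 := by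
    rw [lt_div_iff₀ hlog5] at hp2
    have h10 : Real.log 10 = Real.log 2 + Real.log 5 := by
      rw [show (10:ℝ) = 2 * 5 by norm_num, Real.log_mul (by norm_num) (by norm_num)]
    rw [h10] at hp2
    nlinarith
  set a : ℝ := (5:ℝ) ^ ((1:ℝ)-p) with ha
  have ha0 : (0:ℝ) < a := Real.rpow_pos_of_pos (by norm_num) _
  have hahalf : (2:ℝ)⁻¹ < a := by
    have haexp : a = Real.exp (Real.log 5 * (1-p)) := by
      rw [ha, Real.rpow_def_of_pos (by norm_num)]
    have hhalf : (2:ℝ)⁻¹ = Real.exp (-(Real.log 2)) := by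
      rw [Real.exp_neg, Real.exp_log (by norm_num)]
    rw [haexp, hhalf]
    exact Real.exp_lt_exp.mpr (by nlinarith)
  have h2a : 1 < 2 * a := by nlinarith
  -- Step 3 : uniform upper bound on the growing conductance
  have hbnd : ∀ mm : ℕ, (1/2:ℝ) * 2^mm * ((5^mm + 1 : ℕ):ℝ)^((1:ℝ)-p) ≤ c₂ := by
    intro mm
    have hH := H 1 mm (le_refl 1) Qone1 Qone1_mem
    have h1 := le_trans (conduct_Qone_ge mm p hp1) hH.2
    have hσm : σ ^ (-(mm:ℝ)) ≤ 1 :=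
      Real.rpow_le_one_of_one_le_of_nonpos hσ1 (neg_nonpos.mpr (Nat.cast_nonneg mm))
    calc (1/2:ℝ) * 2^mm * ((5^mm + 1 : ℕ):ℝ)^((1:ℝ)-p)
        ≤ c₂ * σ ^ (-(mm:ℝ)) := h1
    _ ≤ c₂ * 1 := mul_le_mul_of_nonneg_left hσm hc₂.le
    _ = c₂ := mul_one _
  -- Step 4 : rate comparison
  have hrate : ∀ mm : ℕ, a^(mm+1) ≤ ((5^mm + 1 : ℕ):ℝ)^((1:ℝ)-p) := by
    intro mm
    have hpos : (0:ℝ) < ((5^mm + 1 : ℕ):ℝ) := by positivity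
    have hle : ((5^mm + 1 : ℕ):ℝ) ≤ (5:ℝ)^(mm+1) := by
      push_cast
      rw [pow_succ]
      have : (1:ℝ) ≤ (5:ℝ)^mm := one_le_pow₀ (by norm_num)
      nlinarith
    have h1 : ((5:ℝ)^(mm+1))^((1:ℝ)-p) ≤ ((5^mm + 1 : ℕ):ℝ)^((1:ℝ)-p) :=
      Real.rpow_le_rpow_of_nonpos hpos hle (by linarith)
    refine le_trans (le_of_eq ?_) h1
    rw [← Real.rpow_natCast (5:ℝ) (mm+1), ← Real.rpow_mul (by norm_num : (0:ℝ) ≤ 5),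
      mul_comm, Real.rpow_mul (by norm_num : (0:ℝ) ≤ 5), Real.rpow_natCast]
  -- Step 5 : contradiction
  obtain ⟨mm, hmm⟩ := pow_unbounded_of_one_lt (c₂/((1/2)*a)) h2a
  have hcomb : (1/2:ℝ) * a * (2*a)^mm ≤ c₂ := by
    calc (1/2:ℝ) * a * (2*a)^mm = (1/2) * 2^mm * (a^(mm+1)) := by
          rw [mul_pow, pow_succ]; ring
    _ ≤ (1/2) * 2^mm * ((5^mm + 1 : ℕ):ℝ)^((1:ℝ)-p) :=
          mul_le_mul_of_nonneg_left (hrate mm) (by positivity)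
    _ ≤ c₂ := hbnd mm
  have hpos : (0:ℝ) < (1/2:ℝ)*a := by positivity
  rw [div_lt_iff₀ hpos] at hmm
  nlinarith
end

section
/- Let d = 3 and let Q_1 = [0,1/5]^3 ∈ Q_1^(3)(F^(3)). Then for every real p > 1 and every integer m ≥ 1, E_{p,m}(Q_1, Γ(Q_1)^c) ≥ 16^m (5^m + 1)^{1−p}. -/
open Set MeasureTheory Filter
open scoped Classical

noncomputable section AuxCL
namespace CL

/-- A level-1 index is *good* (retained in `F₁`). -/
def gIdx (l : Fin 3 → ℕ) : Prop :=
  (∀ i, 1 ≤ l i ∧ l i ≤ 5) ∧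
    ∀ i : Fin 3, ¬((∀ j, j ≠ i → l j = 3) ∧ (l i = 2 ∨ l i = 4))

lemma pin {a k : ℕ} {x : ℝ} (h1 : ((a:ℝ)-1)/5 ≤ x) (h2 : x ≤ (a:ℝ)/5)
    (h3 : (k:ℝ)/5 < x) (h4 : x < ((k:ℝ)+1)/5) : a = k+1 := by
  have hka : (k:ℕ) < a := by exact_mod_cast (by linarith : (k:ℝ) < a)
  have hak : a < k + 2 := by exact_mod_cast (by linarith : (a:ℝ) < (k:ℝ) + 2)
  omega

lemma mem_cube_iff {d n : ℕ} {l : Fin d → ℕ} {x : Pt d} :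
    x ∈ cube d n l ↔ ∀ i, ((l i:ℝ)-1)/5^n ≤ x i ∧ x i ≤ (l i:ℝ)/5^n := Iff.rfl

lemma mem_interior_cube {d n : ℕ} {l : Fin d → ℕ} {x : Pt d}
    (h : ∀ i, ((l i:ℝ)-1)/5^n < x i ∧ x i < (l i:ℝ)/5^n) :
    x ∈ interior (cube d n l) := by
  rw [mem_interior]
  refine ⟨⋂ i, (fun y : Pt d => y i) ⁻¹' Ioo (((l i:ℝ)-1)/5^n) ((l i:ℝ)/5^n), ?_, ?_, ?_⟩
  · intro y hy
    simp only [mem_iInter, mem_preimage, mem_Ioo] at hy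
    exact fun i => ⟨(hy i).1.le, (hy i).2.le⟩
  · exact isOpen_iInter_of_finite fun i => isOpen_Ioo.preimage ((continuous_apply i).comp (PiLp.continuous_ofLp 2 _))
  · simp only [mem_iInter, mem_preimage, mem_Ioo]
    exact h

lemma cube_subset_F1 {l : Fin 3 → ℕ} (hl : gIdx l) : cube 3 1 l ⊆ F1 3 := by
  intro x hx
  rw [mem_cube_iff] at hx
  have hx' : ∀ i, ((l i:ℝ)-1)/5 ≤ x i ∧ x i ≤ (l i:ℝ)/5 := by
    intro i; have := hx i; rwa [pow_one] at this
  have hcast : ∀ i, (1:ℝ) ≤ l i ∧ (l i:ℝ) ≤ 5 := fun i =>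
    ⟨by exact_mod_cast (hl.1 i).1, by exact_mod_cast (hl.1 i).2⟩
  constructor
  · intro i
    have h1 := (hx' i).1; have h2 := (hx' i).2
    have h3 := (hcast i).1; have h4 := (hcast i).2
    exact ⟨by linarith, by linarith⟩
  · intro hmem
    rw [mem_iUnion] at hmem
    obtain ⟨i, h1, h2, h3⟩ := hmem
    refine hl.2 i ⟨?_, ?_⟩
    · intro j hj
      rcases lt_or_gt_of_ne hj with h | h
      · have hj3 := h1 j h
        have := pin (k := 2) (hx' j).1 (hx' j).2
          (by push_cast; linarith [hj3.1]) (by push_cast; linarith [hj3.2])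
        omega
      · have hj3 := h3 j h
        have := pin (k := 2) (hx' j).1 (hx' j).2
          (by push_cast; linarith [hj3.1]) (by push_cast; linarith [hj3.2])
        omega
    · rcases h2 with h | h
      · left
        have := pin (k := 1) (hx' i).1 (hx' i).2
          (by push_cast; linarith [h.1]) (by push_cast; linarith [h.2])
        omega
      · right
        have := pin (k := 3) (hx' i).1 (hx' i).2
          (by push_cast; linarith [h.1]) (by push_cast; linarith [h.2])
        omega

def half : Pt 3 := WithLp.toLp 2 (fun _ => (1:ℝ)/2)

lemma psi_one_apply (l : Fin 3 → ℕ) (y : Pt 3) (i : Fin 3) :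
    psi 3 1 l y i = ((l i:ℝ)-1)/5 + y i/5 := by simp [psi]

lemma psi_mem_cube {l : Fin 3 → ℕ} {y : Pt 3} (hy : ∀ i, 0 ≤ y i ∧ y i ≤ 1) :
    psi 3 1 l y ∈ cube 3 1 l := by
  rw [mem_cube_iff]
  intro i
  rw [psi_one_apply, pow_one]
  have h1 := (hy i).1; have h2 := (hy i).2
  constructor <;> linarith

lemma gIdx_mem_QcolOfF1 {l : Fin 3 → ℕ} (hl : gIdx l) :
    cube 3 1 l ∈ QcolOf 3 1 (F1 3) := by
  refine ⟨⟨l, fun i => ⟨(hl.1 i).1, by simpa using (hl.1 i).2⟩, rfl⟩, ?_⟩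
  refine ⟨psi 3 1 l half, ?_, cube_subset_F1 hl (psi_mem_cube fun i => by norm_num [half])⟩
  apply mem_interior_cube
  intro i
  have h1 : (1:ℝ) ≤ l i := by exact_mod_cast (hl.1 i).1
  rw [psi_one_apply, pow_one]
  have : half i = 1/2 := rfl
  rw [this]
  constructor <;> linarith

lemma psi_mem_Fset {l : Fin 3 → ℕ} (hl : gIdx l) {y : Pt 3} (hy : y ∈ Fset 3) :
    psi 3 1 l y ∈ Fset 3 := by
  have hy0 : ∀ i, 0 ≤ y i ∧ y i ≤ 1 := by
    have h0 : y ∈ Fn 3 0 := (iInter_subset _ 0) hy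
    exact fun i => (h0 i : y i ∈ Icc (0:ℝ) 1)
  rw [Fset, mem_iInter]
  intro n
  match n with
  | 0 =>
    intro i
    rw [psi_one_apply l y i]
    have h1 : (1:ℝ) ≤ l i := by exact_mod_cast (hl.1 i).1
    have h5 : (l i:ℝ) ≤ 5 := by exact_mod_cast (hl.1 i).2
    have := (hy0 i).1; have := (hy0 i).2
    exact ⟨by linarith, by linarith⟩
  | 1 => exact cube_subset_F1 hl (psi_mem_cube hy0)
  | (n+2) =>
    show psi 3 1 l y ∈ Fn 3 (n+2)
    rw [Fn]
    exact mem_iUnion₂.mpr ⟨l, gIdx_mem_QcolOfF1 hl, ⟨y, (iInter_subset _ (n+1)) hy, rfl⟩⟩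

lemma half_mem_Fn (n : ℕ) : half ∈ Fn 3 n := by
  induction n with
  | zero => exact fun i => ⟨by norm_num [half], by norm_num [half]⟩
  | succ n ih =>
    match n, ih with
    | 0, _ =>
      constructor
      · exact fun i => ⟨by norm_num [half], by norm_num [half]⟩
      · intro hmem
        rw [mem_iUnion] at hmem
        obtain ⟨i, h1, h2, h3⟩ := hmem
        rcases h2 with h | h <;> norm_num [half, mem_Ioo] at h
    | (k+1), ih =>
      show half ∈ Fn 3 (k+2)
      rw [Fn]
      have hg : gIdx (fun _ => 3) := by
        constructor
        · intro i; exact ⟨by norm_num, by norm_num⟩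
        · rintro i ⟨-, h⟩; rcases h with h | h <;> simp at h
      refine mem_iUnion₂.mpr ⟨(fun _ => 3), gIdx_mem_QcolOfF1 hg, ⟨half, ih, ?_⟩⟩
      ext i
      rw [psi_one_apply]
      show (((3:ℕ):ℝ)-1)/5 + (1/2)/5 = (1:ℝ)/2
      norm_num

lemma half_mem_Fset : half ∈ Fset 3 := mem_iInter.mpr half_mem_Fn

end CL
end AuxCL

noncomputable section AuxCL2
namespace CL

def Jn : (N : ℕ) → (Fin N → ℕ) → ℕ
  | 0, _ => 1
  | (N+1), b => (b 0 - 1) * 5^N + Jn N (Fin.tail b)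

lemma Jn_ge_one : ∀ (N : ℕ) (b : Fin N → ℕ), 1 ≤ Jn N b
  | 0, _ => le_refl 1
  | (N+1), b => le_trans (Jn_ge_one N (Fin.tail b)) (Nat.le_add_left _ _)

lemma Jn_le : ∀ (N : ℕ) (b : Fin N → ℕ), (∀ t, b t ≤ 5) → Jn N b ≤ 5^N
  | 0, _, _ => le_refl 1
  | (N+1), b, h => by
    have h1 : b 0 - 1 ≤ 4 := by have := h 0; omega
    have h2 := Jn_le N (Fin.tail b) (fun t => h _)
    calc (b 0 - 1) * 5^N + Jn N (Fin.tail b) ≤ 4 * 5^N + 5^N :=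
          Nat.add_le_add (Nat.mul_le_mul_right _ h1) h2
      _ = 5^(N+1) := by rw [pow_succ]; ring

lemma base5_lt {a a' r r' n : ℕ} (hr : r ≤ 5^n) (hr1' : 1 ≤ r') (h : a < a') :
    a * 5^n + r < a' * 5^n + r' := by
  have h1 : a * 5^n + r ≤ a * 5^n + 5^n := Nat.add_le_add_left hr _
  have h2 : a * 5^n + 5^n = (a+1) * 5^n := by ring
  have h3 : (a+1) * 5^n ≤ a' * 5^n := Nat.mul_le_mul_right _ h
  linarith

lemma Jn_inj : ∀ (N : ℕ) (b b' : Fin N → ℕ), (∀ t, 1 ≤ b t ∧ b t ≤ 5) →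
    (∀ t, 1 ≤ b' t ∧ b' t ≤ 5) → Jn N b = Jn N b' → b = b'
  | 0, b, b', _, _, _ => funext fun t => t.elim0
  | (N+1), b, b', h, h', e => by
    have hr := Jn_ge_one N (Fin.tail b)
    have hr' := Jn_ge_one N (Fin.tail b')
    have hR := Jn_le N (Fin.tail b) fun t => (h _).2
    have hR' := Jn_le N (Fin.tail b') fun t => (h' _).2
    have e' : (b 0 - 1) * 5^N + Jn N (Fin.tail b)
        = (b' 0 - 1) * 5^N + Jn N (Fin.tail b') := e
    have ha : b 0 - 1 = b' 0 - 1 := by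
      rcases Nat.lt_trichotomy (b 0 - 1) (b' 0 - 1) with hlt | heq | hgt
      · exact absurd e' (Nat.ne_of_lt (base5_lt hR hr' hlt))
      · exact heq
      · exact absurd e'.symm (Nat.ne_of_lt (base5_lt hR' hr hgt))
    have hb0 : b 0 = b' 0 := by have := (h 0).1; have := (h' 0).1; omega
    have htail : Fin.tail b = Fin.tail b' := by
      apply Jn_inj N _ _ (fun t => h t.succ) (fun t => h' t.succ)
      rw [ha] at e'
      exact Nat.add_left_cancel e'
    funext i
    refine Fin.cases ?_ ?_ i
    · exact hb0
    · exact fun j => congrFun htail j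

def ctr (N : ℕ) (v : Fin 3 → ℕ) : Pt 3 := WithLp.toLp 2 (fun i => ((v i : ℝ) - 1/2)/5^N)

lemma ctr_mem_interior {N : ℕ} {v : Fin 3 → ℕ} (hv : ∀ i, 1 ≤ v i) :
    ctr N v ∈ interior (cube 3 N v) := by
  apply mem_interior_cube
  intro i
  have h5 : (0:ℝ) < 5^N := by positivity
  have h1 : (1:ℝ) ≤ v i := by exact_mod_cast hv i
  have hc : ctr N v i = ((v i : ℝ) - 1/2)/5^N := rfl
  rw [hc]
  constructor <;> · apply (div_lt_div_iff_of_pos_right h5).mpr; linarith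

lemma ctr_mem_Fset : ∀ (N x : ℕ) (b c : Fin N → ℕ), 1 ≤ x → x ≤ 5^N →
    (∀ t, 1 ≤ b t ∧ b t ≤ 5 ∧ b t ≠ 3) → (∀ t, 1 ≤ c t ∧ c t ≤ 5 ∧ c t ≠ 3) →
    ctr N ![x, Jn N b, Jn N c] ∈ Fset 3
  | 0, x, b, c, hx1, hx5, hb, hc => by
    have hx : x = 1 := le_antisymm (by simpa using hx5) hx1
    subst hx
    have hJ : Jn 0 b = 1 := rfl
    have hJ' : Jn 0 c = 1 := rfl
    have : ctr 0 ![1, Jn 0 b, Jn 0 c] = half := by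
      ext i
      show ((![1, Jn 0 b, Jn 0 c] i : ℝ) - 1/2)/5^0 = 1/2
      fin_cases i <;> simp [hJ, hJ'] <;> norm_num
    rw [this]
    exact half_mem_Fset
  | (N+1), x, b, c, hx1, hx5, hb, hc => by
    have h5N : 0 < 5^N := Nat.pow_pos (by norm_num)
    set q := (x-1) / 5^N with hqdef
    set r := (x-1) % 5^N with hrdef
    have hqr : 5^N * q + r = x - 1 := Nat.div_add_mod _ _
    have hq4 : q ≤ 4 := by
      have hlt : x - 1 < 5^(N+1) := lt_of_lt_of_le (Nat.sub_lt (by omega) one_pos) hx5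
      rw [pow_succ] at hlt
      have : q < 5 := Nat.div_lt_of_lt_mul hlt
      omega
    have hrlt : r < 5^N := Nat.mod_lt _ h5N
    have hb0 : 1 ≤ b 0 := (hb 0).1
    have hc0 : 1 ≤ c 0 := (hc 0).1
    have key : ctr (N+1) ![x, Jn (N+1) b, Jn (N+1) c]
        = psi 3 1 ![q+1, b 0, c 0] (ctr N ![r+1, Jn N (Fin.tail b), Jn N (Fin.tail c)]) := by
      have hxr : (x : ℝ) = 5^N * q + r + 1 := by
        have h1 : (x - 1) + 1 = x := by omega
        rw [← h1, ← hqr]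
        push_cast
        ring
      have h5R : (5:ℝ)^N ≠ 0 := by positivity
      ext i
      rw [psi_one_apply]
      fin_cases i
      · show ((x:ℝ) - 1/2)/5^(N+1)
            = (((q+1:ℕ):ℝ)-1)/5 + (((r+1:ℕ):ℝ) - 1/2)/5^N/5
        rw [hxr]
        push_cast
        rw [pow_succ]
        field_simp
        ring
      · show ((Jn (N+1) b : ℝ) - 1/2)/5^(N+1)
            = (((b 0:ℕ):ℝ)-1)/5 + ((Jn N (Fin.tail b) : ℝ) - 1/2)/5^N/5
        have hJu : Jn (N+1) b = (b 0 - 1) * 5^N + Jn N (Fin.tail b) := rfl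
        rw [hJu]
        push_cast [Nat.cast_sub hb0]
        rw [pow_succ]
        field_simp
        ring
      · show ((Jn (N+1) c : ℝ) - 1/2)/5^(N+1)
            = (((c 0:ℕ):ℝ)-1)/5 + ((Jn N (Fin.tail c) : ℝ) - 1/2)/5^N/5
        have hJu : Jn (N+1) c = (c 0 - 1) * 5^N + Jn N (Fin.tail c) := rfl
        rw [hJu]
        push_cast [Nat.cast_sub hc0]
        rw [pow_succ]
        field_simp
        ring
    rw [key]
    apply psi_mem_Fset
    · constructor
      · intro i
        fin_cases i
        · refine ⟨?_, ?_⟩ <;> simp <;> omega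
        · exact ⟨(hb 0).1, (hb 0).2.1⟩
        · exact ⟨(hc 0).1, (hc 0).2.1⟩
      · intro i hcon
        obtain ⟨hall, hval⟩ := hcon
        fin_cases i
        · have h1 := hall 1 (by decide)
          exact (hb 0).2.2 (by simpa using h1)
        · have h1 := hall 2 (by decide)
          exact (hc 0).2.2 (by simpa using h1)
        · have h1 := hall 1 (by decide)
          exact (hb 0).2.2 (by simpa using h1)
    · exact ctr_mem_Fset N (r+1) (Fin.tail b) (Fin.tail c) (by omega) hrlt
        (fun t => hb t.succ) (fun t => hc t.succ)

lemma cube_mem_QcolOf {N : ℕ} {v : Fin 3 → ℕ} (hv : ∀ i, 1 ≤ v i ∧ v i ≤ 5^N)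
    (hin : ctr N v ∈ Fset 3) : cube 3 N v ∈ QcolOf 3 N (Fset 3) :=
  ⟨⟨v, hv, rfl⟩, ⟨ctr N v, ctr_mem_interior (fun i => (hv i).1), hin⟩⟩

lemma cube_le {d N : ℕ} {v w : Fin d → ℕ} (h : cube d N v ⊆ cube d N w) (i : Fin d) :
    v i ≤ w i := by
  have h5 : (0:ℝ) < 5^N := by positivity
  have hmem : (WithLp.toLp 2 (fun j => (v j : ℝ)/5^N) : Pt d) ∈ cube d N v := by
    intro j
    constructor
    · exact (div_le_div_iff_of_pos_right h5).mpr (by linarith)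
    · exact le_refl _
  have h2 := (h hmem i).2
  have : (v i:ℝ) ≤ w i := (div_le_div_iff_of_pos_right h5).mp h2
  exact_mod_cast this

lemma cube_inj {d N : ℕ} {v w : Fin d → ℕ} (h : cube d N v = cube d N w) : v = w :=
  funext fun i => le_antisymm (cube_le (le_of_eq h) i) (cube_le (le_of_eq h.symm) i)

lemma Qcol_finite (d n : ℕ) : (Qcol d n).Finite := by
  have h : Qcol d n ⊆ (fun l : Fin d → ℕ => cube d n l) '' (univ.pi fun _ : Fin d => Iic (5^n)) := by
    rintro Q ⟨l, hl, rfl⟩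
    exact ⟨l, fun i _ => (hl i).2, rfl⟩
  exact ((Set.Finite.pi fun i => finite_Iic _).image _).subset h

lemma QcolOf_finite (d n : ℕ) (A : Set (Pt d)) : (QcolOf d n A).Finite :=
  (Qcol_finite d n).subset fun _ hQ => hQ.1

end CL
end AuxCL2

noncomputable section AuxCL3
namespace CL

def dig : Fin 4 → ℕ := ![1,2,4,5]

lemma dig_prop : ∀ s : Fin 4, 1 ≤ dig s ∧ dig s ≤ 5 ∧ dig s ≠ 3 := by decide

lemma dig_inj : Function.Injective dig := by decide

def lineJ (m : ℕ) (σ : Fin m → Fin 4) : ℕ := Jn m fun s => dig (σ s)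

lemma lineJ_ge_one (m : ℕ) (σ : Fin m → Fin 4) : 1 ≤ lineJ m σ := Jn_ge_one _ _

lemma lineJ_le (m : ℕ) (σ : Fin m → Fin 4) : lineJ m σ ≤ 5^m :=
  Jn_le _ _ fun t => (dig_prop _).2.1

lemma Jn_cons (m : ℕ) (σ : Fin m → Fin 4) :
    Jn (m+1) (Fin.cons 1 fun s => dig (σ s)) = lineJ m σ := by
  set b : Fin (m+1) → ℕ := Fin.cons 1 fun s => dig (σ s) with hb
  have h : Jn (m+1) b = (b 0 - 1) * 5^m + Jn m (Fin.tail b) := rfl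
  rw [h, hb, Fin.cons_zero, Fin.tail_cons]
  simp [lineJ]

lemma cons_dig_prop (m : ℕ) (σ : Fin m → Fin 4) :
    ∀ t, 1 ≤ (Fin.cons 1 fun s => dig (σ s) : Fin (m+1) → ℕ) t ∧
      (Fin.cons 1 fun s => dig (σ s) : Fin (m+1) → ℕ) t ≤ 5 ∧
      (Fin.cons 1 fun s => dig (σ s) : Fin (m+1) → ℕ) t ≠ 3 := by
  intro t
  refine Fin.cases ?_ ?_ t
  · rw [Fin.cons_zero]; exact ⟨le_refl 1, by norm_num⟩
  · intro j; rw [Fin.cons_succ]; exact dig_prop _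

def pcube (m : ℕ) (σ τ : Fin m → Fin 4) (t : ℕ) : Set (Pt 3) :=
  cube 3 (m+1) ![5^m + t, lineJ m σ, lineJ m τ]

lemma pcube_mem (m : ℕ) (σ τ : Fin m → Fin 4) {t : ℕ} (ht : t ≤ 5^m + 1) :
    pcube m σ τ t ∈ QcolOf 3 (m+1) (Fset 3) := by
  have h5m : 1 ≤ 5^m := Nat.one_le_pow _ _ (by norm_num)
  have hpow : (5:ℕ)^(m+1) = 5 * 5^m := by rw [pow_succ]; ring
  have hx1 : 1 ≤ 5^m + t := by omega
  have hx5 : 5^m + t ≤ 5^(m+1) := by omega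
  apply cube_mem_QcolOf
  · intro i
    fin_cases i
    · exact ⟨hx1, hx5⟩
    · exact ⟨lineJ_ge_one m σ, le_trans (lineJ_le m σ) (by omega)⟩
    · exact ⟨lineJ_ge_one m τ, le_trans (lineJ_le m τ) (by omega)⟩
  · have hv : (![5^m + t, lineJ m σ, lineJ m τ] : Fin 3 → ℕ)
        = ![5^m + t, Jn (m+1) (Fin.cons 1 fun s => dig (σ s)),
            Jn (m+1) (Fin.cons 1 fun s => dig (τ s))] := by
      rw [Jn_cons, Jn_cons]
    rw [hv]
    exact ctr_mem_Fset (m+1) (5^m + t) _ _ hx1 hx5 (cons_dig_prop m σ) (cons_dig_prop m τ)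

lemma pcube_consec (m : ℕ) (σ τ : Fin m → Fin 4) (t : ℕ) :
    (pcube m σ τ t ∩ pcube m σ τ (t+1)).Nonempty := by
  have h5 : (0:ℝ) < 5^(m+1) := by positivity
  refine ⟨WithLp.toLp 2 (fun i => ((![5^m + t, lineJ m σ, lineJ m τ] : Fin 3 → ℕ) i : ℝ)/5^(m+1)), ?_, ?_⟩
  · intro i
    dsimp only
    constructor
    · exact (div_le_div_iff_of_pos_right h5).mpr (by linarith)
    · exact le_refl _
  · intro i
    dsimp only
    have hsame : ∀ j : Fin 3, j ≠ 0 →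
        (![5^m + (t+1), lineJ m σ, lineJ m τ] : Fin 3 → ℕ) j
          = (![5^m + t, lineJ m σ, lineJ m τ] : Fin 3 → ℕ) j := by
      intro j hj
      fin_cases j
      · exact absurd rfl hj
      · rfl
      · rfl
    by_cases hi : i = 0
    · subst hi
      have e0 : (![5^m + (t+1), lineJ m σ, lineJ m τ] : Fin 3 → ℕ) 0 = 5^m + (t+1) := rfl
      have e0' : (![5^m + t, lineJ m σ, lineJ m τ] : Fin 3 → ℕ) 0 = 5^m + t := rfl
      rw [e0, e0']
      constructor
      · exact (div_le_div_iff_of_pos_right h5).mpr (by push_cast; linarith)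
      · exact (div_le_div_iff_of_pos_right h5).mpr (by push_cast; linarith)
    · rw [hsame i hi]
      exact ⟨(div_le_div_iff_of_pos_right h5).mpr (by linarith), le_refl _⟩

lemma pcube_inj {m : ℕ} {σ τ σ' τ' : Fin m → Fin 4} {t t' : ℕ}
    (h : pcube m σ τ t = pcube m σ' τ' t') : σ = σ' ∧ τ = τ' ∧ t = t' := by
  have hv := cube_inj h
  have h0 := congrFun hv 0
  have h1 := congrFun hv 1
  have h2 := congrFun hv 2
  have e0 : (5:ℕ)^m + t = 5^m + t' := h0
  have e1 : lineJ m σ = lineJ m σ' := h1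
  have e2 : lineJ m τ = lineJ m τ' := h2
  have hdigs : ∀ (ρ : Fin m → Fin 4), ∀ s, 1 ≤ dig (ρ s) ∧ dig (ρ s) ≤ 5 :=
    fun ρ s => ⟨(dig_prop _).1, (dig_prop _).2.1⟩
  refine ⟨?_, ?_, by omega⟩
  · have := Jn_inj m _ _ (hdigs σ) (hdigs σ') e1
    funext s
    exact dig_inj (congrFun this s)
  · have := Jn_inj m _ _ (hdigs τ) (hdigs τ') e2
    funext s
    exact dig_inj (congrFun this s)

lemma pcube_zero_mem_Sm (m : ℕ) (σ τ : Fin m → Fin 4) :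
    pcube m σ τ 0 ∈ Sm 3 1 m {Qone 3} := by
  refine ⟨?_, Qone 3, rfl, ?_⟩
  · rw [Nat.add_comm 1 m]
    exact pcube_mem m σ τ (Nat.zero_le _)
  · intro x hx
    have h5 : (0:ℝ) < 5^(m+1) := by positivity
    have hpow : (5:ℝ)^(m+1) = 5^m * 5 := by rw [pow_succ]
    have hv : ∀ i, 1 ≤ (![5^m + 0, lineJ m σ, lineJ m τ] : Fin 3 → ℕ) i ∧
        (![5^m + 0, lineJ m σ, lineJ m τ] : Fin 3 → ℕ) i ≤ 5^m := by
      intro i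
      fin_cases i
      · exact ⟨le_trans (Nat.one_le_pow _ _ (by norm_num)) (Nat.le_add_right _ _),
          Nat.le_of_eq (Nat.add_zero _)⟩
      · exact ⟨lineJ_ge_one m σ, lineJ_le m σ⟩
      · exact ⟨lineJ_ge_one m τ, lineJ_le m τ⟩
    intro i
    have hx' := hx i
    have h1 : (1:ℝ) ≤ ((![5^m + 0, lineJ m σ, lineJ m τ] : Fin 3 → ℕ) i : ℝ) := by
      exact_mod_cast (hv i).1
    have h2 : ((![5^m + 0, lineJ m σ, lineJ m τ] : Fin 3 → ℕ) i : ℝ) ≤ 5^m := by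
      exact_mod_cast (hv i).2
    constructor
    · exact le_trans (div_nonneg (by linarith) h5.le) hx'.1
    · refine le_trans hx'.2 ?_
      rw [div_le_iff₀ h5, hpow]
      nlinarith

lemma cube311_mem_GamC : cube 3 1 ![3,1,1] ∈ GamC 3 1 (Qone 3) := by
  constructor
  · apply cube_mem_QcolOf
    · intro i
      fin_cases i
      · exact ⟨by norm_num, by norm_num⟩
      · exact ⟨le_refl _, by norm_num⟩
      · exact ⟨le_refl _, by norm_num⟩
    · have hv : (![3,1,1] : Fin 3 → ℕ)
          = ![3, Jn 1 (Fin.cons 1 fun s => dig ((Fin.elim0 : Fin 0 → Fin 4) s)),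
              Jn 1 (Fin.cons 1 fun s => dig ((Fin.elim0 : Fin 0 → Fin 4) s))] := by
        rw [Jn_cons]
        have : lineJ 0 (Fin.elim0 : Fin 0 → Fin 4) = 1 := rfl
        rw [this]
      rw [hv]
      exact ctr_mem_Fset 1 3 _ _ (by norm_num) (by norm_num)
        (cons_dig_prop 0 _) (cons_dig_prop 0 _)
  · rintro ⟨-, z, hz1, hz2⟩
    have h1 : (((3:ℕ):ℝ) - 1)/5^1 ≤ z 0 := (hz1 0).1
    have h2 : z 0 ≤ 1/5 := (hz2 0).2
    norm_num at h1
    linarith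

lemma pcube_last_mem_Sm (m : ℕ) (σ τ : Fin m → Fin 4) :
    pcube m σ τ (5^m + 1) ∈ Sm 3 1 m (GamC 3 1 (Qone 3)) := by
  refine ⟨?_, cube 3 1 ![3,1,1], cube311_mem_GamC, ?_⟩
  · rw [Nat.add_comm 1 m]
    exact pcube_mem m σ τ (le_refl _)
  · intro x hx
    have h5 : (0:ℝ) < 5^(m+1) := by positivity
    have h5R : (0:ℝ) < 5^m := by positivity
    have hpow : (5:ℝ)^(m+1) = 5^m * 5 := by rw [pow_succ]
    have hw1all : ∀ i, 1 ≤ (![3,1,1] : Fin 3 → ℕ) i := by decide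
    have hv : ∀ i, ((![3,1,1] : Fin 3 → ℕ) i - 1) * 5^m + 1
          ≤ (![5^m + (5^m+1), lineJ m σ, lineJ m τ] : Fin 3 → ℕ) i ∧
        (![5^m + (5^m+1), lineJ m σ, lineJ m τ] : Fin 3 → ℕ) i
          ≤ (![3,1,1] : Fin 3 → ℕ) i * 5^m := by
      intro i
      have h5m := Nat.one_le_pow m 5 (by norm_num)
      fin_cases i
      · show (3 - 1) * 5^m + 1 ≤ 5^m + (5^m+1) ∧ 5^m + (5^m+1) ≤ 3 * 5^m
        omega
      · show (1 - 1) * 5^m + 1 ≤ lineJ m σ ∧ lineJ m σ ≤ 1 * 5^m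
        have := lineJ_ge_one m σ; have := lineJ_le m σ; omega
      · show (1 - 1) * 5^m + 1 ≤ lineJ m τ ∧ lineJ m τ ≤ 1 * 5^m
        have := lineJ_ge_one m τ; have := lineJ_le m τ; omega
    intro i
    have hx' := hx i
    have h1 : (((![3,1,1] : Fin 3 → ℕ) i : ℝ) - 1) * 5^m + 1
        ≤ ((![5^m + (5^m+1), lineJ m σ, lineJ m τ] : Fin 3 → ℕ) i : ℝ) := by
      have h := (hv i).1
      have hw1 := hw1all i
      calc (((![3,1,1] : Fin 3 → ℕ) i : ℝ) - 1) * 5^m + 1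
          = ((((![3,1,1] : Fin 3 → ℕ) i - 1) * 5^m + 1 : ℕ) : ℝ) := by
            push_cast [Nat.cast_sub hw1]; ring
        _ ≤ _ := by exact_mod_cast h
    have h2 : ((![5^m + (5^m+1), lineJ m σ, lineJ m τ] : Fin 3 → ℕ) i : ℝ)
        ≤ ((![3,1,1] : Fin 3 → ℕ) i : ℝ) * 5^m := by
      have h := (hv i).2
      exact_mod_cast h
    constructor
    · refine le_trans ?_ hx'.1
      rw [div_le_div_iff₀ (by norm_num) h5, hpow]
      nlinarith
    · refine le_trans hx'.2 ?_
      rw [div_le_div_iff₀ h5 (by norm_num), hpow]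
      nlinarith

end CL
end AuxCL3

noncomputable section AuxCL4
namespace CL

lemma chain_bound {p : ℝ} (hp : 1 < p) {K : ℕ} (hK : 1 ≤ K) (g : ℕ → ℝ)
    (h0 : g 0 = 1) (hK0 : g K = 0) :
    ((K:ℝ)) ^ (1-p) ≤ ∑ t ∈ Finset.range K, |g t - g (t+1)| ^ p := by
  have hKpos : (0:ℝ) < K := by exact_mod_cast hK
  set a : ℕ → ℝ := fun t => |g t - g (t+1)| with ha
  have ha0 : ∀ t, 0 ≤ a t := fun t => abs_nonneg _
  have hsum : 1 ≤ ∑ t ∈ Finset.range K, a t := by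
    have h1 : ∑ t ∈ Finset.range K, (g t - g (t+1)) = g 0 - g K := Finset.sum_range_sub' g K
    calc (1:ℝ) = |g 0 - g K| := by rw [h0, hK0]; norm_num
      _ = |∑ t ∈ Finset.range K, (g t - g (t+1))| := by rw [h1]
      _ ≤ ∑ t ∈ Finset.range K, |g t - g (t+1)| := Finset.abs_sum_le_sum_abs _ _
  have hold := Real.rpow_arith_mean_le_arith_mean_rpow (Finset.range K)
      (fun _ => (K:ℝ)⁻¹) a (fun i _ => by positivity)
      (by simp [Finset.sum_const, Finset.card_range]
          field_simp)
      (fun i _ => ha0 i) hp.le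
  rw [← Finset.mul_sum, ← Finset.mul_sum] at hold
  have hL : ((K:ℝ)⁻¹)^p ≤ (K:ℝ)⁻¹ * ∑ t ∈ Finset.range K, a t ^ p := by
    refine le_trans ?_ hold
    apply Real.rpow_le_rpow (by positivity) ?_ (by linarith)
    exact le_mul_of_one_le_right (by positivity) hsum
  have h2 : (K:ℝ)^(1-p) = K * ((K:ℝ)⁻¹)^p := by
    rw [Real.rpow_sub hKpos, Real.rpow_one, Real.inv_rpow hKpos.le, div_eq_mul_inv]
  rw [h2]
  calc (K:ℝ) * ((K:ℝ)⁻¹)^p ≤ K * ((K:ℝ)⁻¹ * ∑ t ∈ Finset.range K, a t ^ p) :=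
        mul_le_mul_of_nonneg_left hL hKpos.le
    _ = ∑ t ∈ Finset.range K, a t ^ p := by field_simp
    _ = ∑ t ∈ Finset.range K, |g t - g (t+1)| ^ p := rfl

end CL
end AuxCL4

noncomputable section AuxCL5
namespace CL

def eTerm (n : ℕ) (p : ℝ) (f : Set (Pt 3) → ℝ)
    (z : ↥(QcolOf 3 n (Fset 3)) × ↥(QcolOf 3 n (Fset 3))) : ℝ :=
  if ((z.1 : Set (Pt 3)) ∩ (z.2 : Set (Pt 3))).Nonempty then |f z.1 - f z.2| ^ p else 0

lemma eTerm_nonneg (n : ℕ) (p : ℝ) (f : Set (Pt 3) → ℝ)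
    (z : ↥(QcolOf 3 n (Fset 3)) × ↥(QcolOf 3 n (Fset 3))) : 0 ≤ eTerm n p f z := by
  rw [eTerm]
  split
  · exact Real.rpow_nonneg (abs_nonneg _) _
  · exact le_refl 0

def pel (m : ℕ) (σ τ : Fin m → Fin 4) (t : ℕ) (ht : t ≤ 5^m+1) :
    ↥(QcolOf 3 (m+1) (Fset 3)) :=
  ⟨pcube m σ τ t, pcube_mem m σ τ ht⟩

def emap (m : ℕ) (z : ((Fin m → Fin 4) × (Fin m → Fin 4)) × Fin (5^m+1) × Bool) :
    ↥(QcolOf 3 (m+1) (Fset 3)) × ↥(QcolOf 3 (m+1) (Fset 3)) :=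
  match z with
  | ((σ,τ),(t,true)) => (pel m σ τ t (le_of_lt t.isLt), pel m σ τ ((t:ℕ)+1) t.isLt)
  | ((σ,τ),(t,false)) => (pel m σ τ ((t:ℕ)+1) t.isLt, pel m σ τ t (le_of_lt t.isLt))

lemma emap_inj (m : ℕ) : Function.Injective (emap m) := by
  rintro ⟨⟨σ,τ⟩,t,s⟩ ⟨⟨σ',τ'⟩,t',s'⟩ h
  cases s <;> cases s' <;>
    · dsimp only [emap] at h
      have h1 := congrArg (fun w : ↥(QcolOf 3 (m+1) (Fset 3)) × ↥(QcolOf 3 (m+1) (Fset 3))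
        => (w.1 : Set (Pt 3))) h
      have h2 := congrArg (fun w : ↥(QcolOf 3 (m+1) (Fset 3)) × ↥(QcolOf 3 (m+1) (Fset 3))
        => (w.2 : Set (Pt 3))) h
      dsimp only [pel] at h1 h2
      first
      | -- same orientation
        (obtain ⟨hσ, hτ, ht⟩ := pcube_inj h1
         subst hσ; subst hτ
         have ht' : t = t' := Fin.ext (by omega)
         subst ht'
         rfl)
      | -- opposite orientation: contradiction
        (obtain ⟨-, -, ha⟩ := pcube_inj h1
         obtain ⟨-, -, hb⟩ := pcube_inj h2
         omega)

lemma eTerm_emap (m : ℕ) (p : ℝ) (f : Set (Pt 3) → ℝ) (σ τ : Fin m → Fin 4)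
    (t : Fin (5^m+1)) (s : Bool) :
    eTerm (m+1) p f (emap m ((σ,τ),(t,s)))
      = |f (pcube m σ τ t) - f (pcube m σ τ ((t:ℕ)+1))| ^ p := by
  cases s
  · show (if (pcube m σ τ ((t:ℕ)+1) ∩ pcube m σ τ t).Nonempty
        then |f (pcube m σ τ ((t:ℕ)+1)) - f (pcube m σ τ t)| ^ p else 0) = _
    rw [if_pos (by rw [inter_comm]; exact pcube_consec m σ τ t), abs_sub_comm]
  · show (if (pcube m σ τ t ∩ pcube m σ τ ((t:ℕ)+1)).Nonempty
        then |f (pcube m σ τ t) - f (pcube m σ τ ((t:ℕ)+1))| ^ p else 0) = _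
    rw [if_pos (pcube_consec m σ τ t)]

end CL
end AuxCL5

/-- Lower bound on the conductance of the corner cube `Q₁ = [0,1/5]³` in `F⁽³⁾`. -/
theorem statement3 (p : ℝ) (hp : 1 < p) (m : ℕ) (hm : 1 ≤ m) :
    (16 : ℝ) ^ m * (5 ^ m + 1 : ℝ) ^ (1 - p) ≤
      conduct 3 1 m p {Qone 3} (GamC 3 1 (Qone 3)) := by
  classical
  have main : ∀ f : Set (Pt 3) → ℝ,
      (∀ Q ∈ Sm 3 1 m {Qone 3}, f Q = 1) →
      (∀ Q ∈ Sm 3 1 m (GamC 3 1 (Qone 3)), f Q = 0) →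
      (16:ℝ)^m * ((5:ℝ)^m + 1)^(1-p) ≤ energy 3 (1+m) p f := by
    intro f hf1 hf0
    rw [show 1 + m = m + 1 from Nat.add_comm 1 m]
    haveI hFT : Fintype ↥(QcolOf 3 (m+1) (Fset 3)) :=
      (CL.QcolOf_finite 3 (m+1) (Fset 3)).fintype
    set c : ℝ := ((5:ℝ)^m + 1)^(1-p) with hc
    have hcpos : 0 ≤ c := Real.rpow_nonneg (by positivity) _
    -- per-line estimate
    have hline : ∀ σ τ : Fin m → Fin 4,
        c ≤ ∑ t : Fin (5^m+1),
          |f (CL.pcube m σ τ t) - f (CL.pcube m σ τ ((t:ℕ)+1))| ^ p := by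
      intro σ τ
      have hK : ((5^m + 1 : ℕ) : ℝ) = (5:ℝ)^m + 1 := by push_cast; ring
      have hch := CL.chain_bound hp (K := 5^m + 1) (Nat.le_add_left 1 _)
        (fun t => f (CL.pcube m σ τ t))
        (hf1 _ (CL.pcube_zero_mem_Sm m σ τ)) (hf0 _ (CL.pcube_last_mem_Sm m σ τ))
      rw [hK] at hch
      refine le_trans hch (le_of_eq ?_)
      exact (Fin.sum_univ_eq_sum_range
        (fun t => |f (CL.pcube m σ τ t) - f (CL.pcube m σ τ (t+1))| ^ p) (5^m+1)).symm
    -- the big sum estimate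
    have hbig : ∑ στ : (Fin m → Fin 4) × (Fin m → Fin 4), (2 * c)
        ≤ ∑ z : ↥(QcolOf 3 (m+1) (Fset 3)) × ↥(QcolOf 3 (m+1) (Fset 3)),
            CL.eTerm (m+1) p f z := by
      calc ∑ στ : (Fin m → Fin 4) × (Fin m → Fin 4), (2 * c)
          ≤ ∑ στ : (Fin m → Fin 4) × (Fin m → Fin 4), ∑ t : Fin (5^m+1),
              (2 * |f (CL.pcube m στ.1 στ.2 t) - f (CL.pcube m στ.1 στ.2 ((t:ℕ)+1))| ^ p) := by
            refine Finset.sum_le_sum fun στ _ => ?_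
            rw [← Finset.mul_sum]
            have := hline στ.1 στ.2
            linarith
        _ = ∑ στ : (Fin m → Fin 4) × (Fin m → Fin 4), ∑ ts : Fin (5^m+1) × Bool,
              CL.eTerm (m+1) p f (CL.emap m (στ, ts)) := by
            refine Finset.sum_congr rfl fun στ _ => ?_
            obtain ⟨σ, τ⟩ := στ
            rw [Fintype.sum_prod_type]
            refine Finset.sum_congr rfl fun t _ => ?_
            have hb : ∑ s : Bool, CL.eTerm (m+1) p f (CL.emap m ((σ, τ), (t, s)))
                = CL.eTerm (m+1) p f (CL.emap m ((σ, τ), (t, true)))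
                  + CL.eTerm (m+1) p f (CL.emap m ((σ, τ), (t, false))) := by
              simp
            rw [CL.eTerm_emap, CL.eTerm_emap] at hb
            rw [hb]
            ring
        _ = ∑ e : ((Fin m → Fin 4) × (Fin m → Fin 4)) × Fin (5^m+1) × Bool,
              CL.eTerm (m+1) p f (CL.emap m e) :=
            (Fintype.sum_prod_type fun e => CL.eTerm (m+1) p f (CL.emap m e)).symm
        _ = ∑ z ∈ Finset.image (CL.emap m) Finset.univ, CL.eTerm (m+1) p f z :=
            (Finset.sum_image fun x _ y _ h => CL.emap_inj m h).symm
        _ ≤ ∑ z : ↥(QcolOf 3 (m+1) (Fset 3)) × ↥(QcolOf 3 (m+1) (Fset 3)),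
              CL.eTerm (m+1) p f z :=
            Finset.sum_le_sum_of_subset_of_nonneg (Finset.subset_univ _)
              (fun z _ _ => CL.eTerm_nonneg _ _ _ z)
    -- identify the energy
    have henergy : energy 3 (m+1) p f
        = (1/2) * ∑ z : ↥(QcolOf 3 (m+1) (Fset 3)) × ↥(QcolOf 3 (m+1) (Fset 3)),
            CL.eTerm (m+1) p f z := by
      rw [energy]
      rw [Fintype.sum_prod_type]
      congr 1
      rw [tsum_fintype]
      refine Finset.sum_congr rfl fun Q _ => ?_
      rw [tsum_fintype]
      refine Finset.sum_congr rfl fun Q' _ => ?_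
      rfl
    have hcount : ∑ στ : (Fin m → Fin 4) × (Fin m → Fin 4), (2 * c)
        = (16:ℝ)^m * (2 * c) := by
      rw [Finset.sum_const, nsmul_eq_mul]
      congr 1
      have : Fintype.card ((Fin m → Fin 4) × (Fin m → Fin 4)) = 16^m := by
        simp [Fintype.card_prod, Fintype.card_fun]
        rw [← Nat.mul_pow]
      rw [Finset.card_univ, this]
      push_cast
      ring
    rw [henergy]
    rw [hcount] at hbig
    linarith
  -- witness that the conductance set is nonempty
  have hwit : ∃ e : ℝ, ∃ f : Set (Pt 3) → ℝ,
      (∀ Q ∈ Sm 3 1 m {Qone 3}, f Q = 1) ∧ (∀ Q ∈ Sm 3 1 m (GamC 3 1 (Qone 3)), f Q = 0) ∧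
      e = energy 3 (1 + m) p f := by
    refine ⟨_, fun Q => if Q ∈ Sm 3 1 m {Qone 3} then 1 else 0, fun Q hQ => if_pos hQ,
      fun Q hQ => ?_, rfl⟩
    dsimp only
    rw [if_neg]
    intro hQ1
    obtain ⟨hQcol, Q', hQ'GamC, hQsub⟩ := hQ
    obtain ⟨-, QS, hQS, hsub1⟩ := hQ1
    rw [mem_singleton_iff] at hQS
    subst hQS
    obtain ⟨x, hxint, -⟩ := hQcol.2
    have hxQ : x ∈ Q := interior_subset hxint
    exact hQ'GamC.2 ⟨hQ'GamC.1, ⟨x, hQsub hxQ, hsub1 hxQ⟩⟩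
  rw [conduct]
  apply le_csInf
  · obtain ⟨e, f, h1, h2, h3⟩ := hwit
    exact ⟨e, f, h1, h2, h3⟩
  · rintro e ⟨f, hf1, hf0, rfl⟩
    exact main f hf1 hf0
end

section
/- Let d = 2 and let Q_2 = [2/5,3/5]^2 ∈ Q_1^(2)(F^(2)). Then for every real p > 1 and every integer m ≥ 1, E_{p,m}(Q_2, Γ(Q_2)^c) ≤ 4. -/
open Set MeasureTheory Filter
open scoped Classical

namespace Stmt4Aux

lemma fn_one (d : ℕ) : Fn d 1 = F1 d := rfl

lemma fset_subset_F1 (d : ℕ) : Fset d ⊆ F1 d := by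
  intro x hx
  have := Set.mem_iInter.1 hx 1
  rwa [fn_one] at this

lemma pow_pos5 (n : ℕ) : (0:ℝ) < 5 ^ n := by positivity

lemma div5 (m : ℕ) (a : ℝ) : a / 5 = (a * 5 ^ m) / 5 ^ (1 + m) := by
  rw [pow_add, div_eq_div_iff (by norm_num) (by positivity)]
  ring

lemma fin2_eq_of_ne {i j k : Fin 2} (h1 : j ≠ i) (h2 : k ≠ i) : k = j := by
  have hi := i.isLt; have hj := j.isLt; have hk := k.isLt
  have h1' : j.val ≠ i.val := fun h => h1 (Fin.ext h)
  have h2' : k.val ≠ i.val := fun h => h2 (Fin.ext h)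
  exact Fin.ext (by omega)

lemma interior_strict {n : ℕ} {l : Fin 2 → ℕ} {y : Pt 2}
    (hy : y ∈ interior (cube 2 n l)) (i : Fin 2) :
    ((l i : ℝ) - 1) / 5 ^ n < y i ∧ y i < (l i : ℝ) / 5 ^ n := by
  obtain ⟨ε, hε, hball⟩ := Metric.isOpen_iff.1 isOpen_interior y hy
  have hmem : ∀ c : ℝ, |c| < ε →
      ((l i : ℝ) - 1) / 5 ^ n ≤ y i + c ∧ y i + c ≤ (l i : ℝ) / 5 ^ n := by
    intro c hc
    have hz : y + c • (EuclideanSpace.single i (1:ℝ)) ∈ cube 2 n l := by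
      apply interior_subset
      apply hball
      rw [Metric.mem_ball, dist_self_add_left]
      calc ‖c • EuclideanSpace.single i (1:ℝ)‖
          = |c| * ‖EuclideanSpace.single i (1:ℝ)‖ := by
            rw [norm_smul, Real.norm_eq_abs]
        _ = |c| := by rw [EuclideanSpace.norm_single]; simp
        _ < ε := hc
    have h := hz i
    simpa [PiLp.add_apply, PiLp.smul_apply, EuclideanSpace.single_apply] using h
  constructor
  · have h := (hmem (-(ε/2)) (by rw [abs_neg, abs_of_pos (by linarith)]; linarith)).1
    linarith
  · have h := (hmem (ε/2) (by rw [abs_of_pos (by linarith)]; linarith)).2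
    linarith

lemma subset_Qtwo_iff {m : ℕ} (l : Fin 2 → ℕ) :
    cube 2 (1+m) l ⊆ Qtwo 2 ↔ ∀ i, 2*5^m + 1 ≤ l i ∧ l i ≤ 3*5^m := by
  have hN := pow_pos5 (1+m)
  constructor
  · intro h i
    have h1 : (WithLp.toLp 2 (fun j => ((l j : ℝ) - 1) / 5 ^ (1+m)) : Pt 2) ∈ cube 2 (1+m) l := by
      intro j
      refine ⟨le_refl _, ?_⟩
      show ((l j : ℝ) - 1) / 5 ^ (1+m) ≤ (l j : ℝ) / 5 ^ (1+m)
      gcongr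
      linarith
    have h2 : (WithLp.toLp 2 (fun j => (l j : ℝ) / 5 ^ (1+m)) : Pt 2) ∈ cube 2 (1+m) l := by
      intro j
      refine ⟨?_, le_refl _⟩
      show ((l j : ℝ) - 1) / 5 ^ (1+m) ≤ (l j : ℝ) / 5 ^ (1+m)
      gcongr
      linarith
    have hlow : (2/5 : ℝ) ≤ ((l i : ℝ) - 1) / 5 ^ (1+m) := (h h1 i).1
    have hhigh : (l i : ℝ) / 5 ^ (1+m) ≤ 3/5 := (h h2 i).2
    rw [div5 m 2, div_le_div_iff_of_pos_right hN] at hlow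
    rw [div5 m 3, div_le_div_iff_of_pos_right hN] at hhigh
    constructor
    · have : ((2*5^m + 1 : ℕ) : ℝ) ≤ (l i : ℝ) := by push_cast; linarith
      exact_mod_cast this
    · have : (l i : ℝ) ≤ ((3*5^m : ℕ) : ℝ) := by push_cast; linarith
      exact_mod_cast this
  · intro h x hx i
    have hi := hx i
    have hb := h i
    have hb1 : ((2*5^m + 1 : ℕ) : ℝ) ≤ (l i : ℝ) := Nat.cast_le.2 hb.1
    have hb2 : (l i : ℝ) ≤ ((3*5^m : ℕ) : ℝ) := Nat.cast_le.2 hb.2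
    push_cast at hb1 hb2
    constructor
    · calc (2/5 : ℝ) = (2 * 5^m) / 5 ^ (1+m) := div5 m 2
        _ ≤ ((l i : ℝ) - 1) / 5 ^ (1+m) := by gcongr <;> linarith
        _ ≤ x i := hi.1
    · calc x i ≤ (l i : ℝ) / 5 ^ (1+m) := hi.2
        _ ≤ (3 * 5^m) / 5 ^ (1+m) := by gcongr <;> linarith
        _ = 3/5 := (div5 m 3).symm

lemma cross_not_mem {m : ℕ} {l : Fin 2 → ℕ} {i j : Fin 2} (hij : j ≠ i)
    (hi : l i = 2*5^m ∨ l i = 3*5^m + 1) (hj1 : 2*5^m + 1 ≤ l j) (hj2 : l j ≤ 3*5^m) :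
    cube 2 (1+m) l ∉ QcolOf 2 (1+m) (Fset 2) := by
  rintro ⟨-, y, hyi, hyF⟩
  have hy1 : y ∈ F1 2 := fset_subset_F1 2 hyF
  have hN := pow_pos5 (1+m)
  have h5m : (1:ℝ) ≤ 5 ^ m := one_le_pow₀ (by norm_num)
  have hstrict := fun k => interior_strict hyi k
  have hInner : ∀ k : Fin 2, 2*5^m + 1 ≤ l k → l k ≤ 3*5^m → y k ∈ Set.Ioo (2/5 : ℝ) (3/5) := by
    intro k hk1 hk2
    obtain ⟨ha, hb⟩ := hstrict k
    have hk1' : ((2*5^m + 1 : ℕ) : ℝ) ≤ (l k : ℝ) := Nat.cast_le.2 hk1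
    have hk2' : (l k : ℝ) ≤ ((3*5^m : ℕ) : ℝ) := Nat.cast_le.2 hk2
    push_cast at hk1' hk2'
    constructor
    · calc (2/5 : ℝ) = (2 * 5^m) / 5 ^ (1+m) := div5 m 2
        _ ≤ ((l k : ℝ) - 1) / 5 ^ (1+m) := by gcongr; linarith
        _ < y k := ha
    · calc y k < (l k : ℝ) / 5 ^ (1+m) := hb
        _ ≤ (3 * 5^m) / 5 ^ (1+m) := by gcongr
        _ = 3/5 := (div5 m 3).symm
  have hyj : y j ∈ Set.Ioo (2/5 : ℝ) (3/5) := hInner j hj1 hj2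
  have hyi' : y i ∈ Set.Ioo (1/5 : ℝ) (2/5) ∪ Set.Ioo (3/5 : ℝ) (4/5) := by
    obtain ⟨ha, hb⟩ := hstrict i
    rcases hi with h | h
    · left
      have h' : (l i : ℝ) = 2 * 5^m := by
        have : (l i : ℝ) = ((2*5^m : ℕ) : ℝ) := by exact_mod_cast congrArg (Nat.cast (R := ℝ)) h
        push_cast at this; linarith
      constructor
      · calc (1/5 : ℝ) = (1 * 5^m) / 5 ^ (1+m) := div5 m 1
          _ ≤ ((l i : ℝ) - 1) / 5 ^ (1+m) := by gcongr; linarith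
          _ < y i := ha
      · calc y i < (l i : ℝ) / 5 ^ (1+m) := hb
          _ = (2 * 5^m) / 5 ^ (1+m) := by rw [h']
          _ = 2/5 := (div5 m 2).symm
    · right
      have h' : (l i : ℝ) = 3 * 5^m + 1 := by
        have : (l i : ℝ) = ((3*5^m + 1 : ℕ) : ℝ) := by exact_mod_cast congrArg (Nat.cast (R := ℝ)) h
        push_cast at this; linarith
      constructor
      · calc (3/5 : ℝ) = (3 * 5^m) / 5 ^ (1+m) := div5 m 3
          _ ≤ ((l i : ℝ) - 1) / 5 ^ (1+m) := by gcongr; linarith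
          _ < y i := ha
      · calc y i < (l i : ℝ) / 5 ^ (1+m) := hb
          _ ≤ (4 * 5^m) / 5 ^ (1+m) := by gcongr; linarith
          _ = 4/5 := (div5 m 4).symm
  apply hy1.2
  refine Set.mem_iUnion.2 ⟨i, ?_, hyi', ?_⟩
  · intro j' hj'
    have : j' = j := fin2_eq_of_ne hij (ne_of_lt hj')
    rw [this]; exact hyj
  · intro j' hj'
    have : j' = j := fin2_eq_of_ne hij (ne_of_gt hj')
    rw [this]; exact hyj

def innerL (m : ℕ) (s : Fin 2 → Bool) : Fin 2 → ℕ :=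
  fun i => if s i then 3*5^m else 2*5^m + 1

def outerL (m : ℕ) (s : Fin 2 → Bool) : Fin 2 → ℕ :=
  fun i => if s i then 3*5^m + 1 else 2*5^m

lemma core {m : ℕ} {A B : Set (Pt 2)}
    (hA : A ∈ QcolOf 2 (1+m) (Fset 2)) (hB : B ∈ QcolOf 2 (1+m) (Fset 2))
    (hAB : (A ∩ B).Nonempty) (hAin : A ⊆ Qtwo 2) (hBout : ¬ B ⊆ Qtwo 2) :
    ∃ s : Fin 2 → Bool, A = cube 2 (1+m) (innerL m s) ∧ B = cube 2 (1+m) (outerL m s) := by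
  classical
  have h5 : 1 ≤ 5^m := Nat.one_le_pow _ _ (by norm_num)
  obtain ⟨l, hlb, rfl⟩ := hA.1
  obtain ⟨l', hlb', rfl⟩ := hB.1
  have hN := pow_pos5 (1+m)
  have hlQ : ∀ i, 2*5^m + 1 ≤ l i ∧ l i ≤ 3*5^m := (subset_Qtwo_iff l).1 hAin
  have hadj : ∀ i, l' i ≤ l i + 1 ∧ l i ≤ l' i + 1 := by
    obtain ⟨x, hxA, hxB⟩ := hAB
    intro i
    have h1 := hxA i; have h2 := hxB i
    constructor
    · have hr : ((l' i : ℝ) - 1) / 5 ^ (1+m) ≤ (l i : ℝ) / 5 ^ (1+m) := le_trans h2.1 h1.2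
      rw [div_le_div_iff_of_pos_right hN] at hr
      have : (l' i : ℝ) ≤ (l i : ℝ) + 1 := by linarith
      exact_mod_cast this
    · have hr : ((l i : ℝ) - 1) / 5 ^ (1+m) ≤ (l' i : ℝ) / 5 ^ (1+m) := le_trans h1.1 h2.2
      rw [div_le_div_iff_of_pos_right hN] at hr
      have : (l i : ℝ) ≤ (l' i : ℝ) + 1 := by linarith
      exact_mod_cast this
  have hBout' : ∃ i, l' i ≤ 2*5^m ∨ 3*5^m + 1 ≤ l' i := by
    by_contra hcon
    push_neg at hcon
    exact hBout ((subset_Qtwo_iff l').2 (fun i => by have := hcon i; omega))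
  obtain ⟨i₀, hi₀⟩ := hBout'
  have hval : ∀ i, (l' i ≤ 2*5^m ∨ 3*5^m + 1 ≤ l' i) → (l' i = 2*5^m ∨ l' i = 3*5^m + 1) := by
    intro i h
    have h1 := hadj i; have h2 := hlQ i
    omega
  have hi₀' := hval i₀ hi₀
  set j : Fin 2 := if i₀ = (0 : Fin 2) then 1 else 0 with hjdef
  have hji : j ≠ i₀ := by
    rcases eq_or_ne i₀ 0 with h | h
    · rw [hjdef, if_pos h, h]; decide
    · rw [hjdef, if_neg h]; exact Ne.symm h
  have hj' : l' j = 2*5^m ∨ l' j = 3*5^m + 1 := by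
    rcases le_or_gt (l' j) (2*5^m) with h | h
    · exact hval j (Or.inl h)
    rcases le_or_gt (3*5^m + 1) (l' j) with h2 | h2
    · exact hval j (Or.inr h2)
    exact absurd hB (cross_not_mem hji hi₀' (by omega) (by omega))
  have hall : ∀ i, l' i = 2*5^m ∨ l' i = 3*5^m + 1 := by
    intro i
    rcases eq_or_ne i i₀ with rfl | h
    · exact hi₀'
    · rw [fin2_eq_of_ne hji h]; exact hj'
  refine ⟨fun i => decide (l' i = 3*5^m + 1), ?_, ?_⟩
  · have : l = innerL m (fun i => decide (l' i = 3*5^m + 1)) := by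
      funext i
      have h1 := hadj i; have h2 := hlQ i
      rcases hall i with h | h
      · have hs : decide (l' i = 3*5^m + 1) = false := by
          simp only [decide_eq_false_iff_not]
          omega
        simp only [innerL, hs, Bool.false_eq_true, if_false]
        omega
      · have hs : decide (l' i = 3*5^m + 1) = true := by
          simp only [decide_eq_true_eq]; exact h
        simp only [innerL, hs, if_true]
        omega
    exact congrArg (cube 2 (1+m)) this
  · have : l' = outerL m (fun i => decide (l' i = 3*5^m + 1)) := by
      funext i
      rcases hall i with h | h
      · have hs : decide (l' i = 3*5^m + 1) = false := by
          simp only [decide_eq_false_iff_not]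
          omega
        simp only [outerL, hs, Bool.false_eq_true, if_false]
        omega
      · have hs : decide (l' i = 3*5^m + 1) = true := by
          simp only [decide_eq_true_eq]; exact h
        simp only [outerL, hs, if_true]
        omega
    exact congrArg (cube 2 (1+m)) this


lemma qcolOf_finite (d n : ℕ) (A : Set (Pt d)) : (QcolOf d n A).Finite := by
  have h1 : (Set.univ.pi (fun _ : Fin d => Set.Iic (5^n))).Finite :=
    Set.Finite.pi (fun _ => Set.finite_Iic _)
  apply (h1.image (fun l => cube d n l)).subset
  rintro Q ⟨⟨l, hl, rfl⟩, -⟩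
  exact ⟨l, Set.mem_univ_pi.2 (fun i => (hl i).2), rfl⟩

end Stmt4Aux

/-- Upper bound on the conductance of the center cube `Q₂ = [2/5,3/5]²` in `F⁽²⁾`. -/


theorem statement4 (p : ℝ) (hp : 1 < p) (m : ℕ) (hm : 1 ≤ m) :
    conduct 2 1 m p {Qtwo 2} (GamC 2 1 (Qtwo 2)) ≤ 4 := by
  classical
  open Stmt4Aux in
  have hp0 : p ≠ 0 := by positivity
  have hfin : (QcolOf 2 (1+m) (Fset 2)).Finite := Stmt4Aux.qcolOf_finite 2 (1+m) (Fset 2)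
  haveI : Fintype ↥(QcolOf 2 (1+m) (Fset 2)) := hfin.fintype
  set f : Set (Pt 2) → ℝ := fun Q => if Q ⊆ Qtwo 2 then 1 else 0 with hfdef
  -- the energy of any competitor is nonnegative
  have henergy_nonneg : ∀ g : Set (Pt 2) → ℝ, 0 ≤ energy 2 (1+m) p g := by
    intro g
    unfold energy
    refine mul_nonneg (by norm_num) (tsum_nonneg fun Q => tsum_nonneg fun Q' => ?_)
    split
    · exact Real.rpow_nonneg (abs_nonneg _) _
    · exact le_rfl
  have hbdd : BddBelow {e : ℝ | ∃ g : Set (Pt 2) → ℝ,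
      (∀ Q ∈ Sm 2 1 m {Qtwo 2}, g Q = 1) ∧ (∀ Q ∈ Sm 2 1 m (GamC 2 1 (Qtwo 2)), g Q = 0) ∧
      e = energy 2 (1 + m) p g} := by
    refine ⟨0, fun e he => ?_⟩
    obtain ⟨g, -, -, rfl⟩ := he
    exact henergy_nonneg g
  have hmem : energy 2 (1+m) p f ∈ {e : ℝ | ∃ g : Set (Pt 2) → ℝ,
      (∀ Q ∈ Sm 2 1 m {Qtwo 2}, g Q = 1) ∧ (∀ Q ∈ Sm 2 1 m (GamC 2 1 (Qtwo 2)), g Q = 0) ∧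
      e = energy 2 (1 + m) p g} := by
    refine ⟨f, ?_, ?_, rfl⟩
    · rintro Q ⟨hQ, Q', hQ', hsub⟩
      rw [Set.mem_singleton_iff] at hQ'
      subst hQ'
      exact if_pos hsub
    · rintro Q ⟨hQ, Q', hQ', hsub⟩
      have hQne : Q.Nonempty := by
        obtain ⟨y, hy, -⟩ := hQ.2
        exact ⟨y, interior_subset hy⟩
      have hdis : ¬ (Q' ∩ Qtwo 2).Nonempty := fun h => hQ'.2 ⟨hQ'.1, h⟩
      refine if_neg (fun hsub2 => ?_)
      obtain ⟨y, hy⟩ := hQne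
      exact hdis ⟨y, hsub hy, hsub2 hy⟩
  refine le_trans (csInf_le hbdd hmem) ?_
  -- now bound the energy of f
  set P8 : Finset (Set (Pt 2) × Set (Pt 2)) :=
    (Finset.univ : Finset ((Fin 2 → Bool) × Bool)).image
      (fun z => if z.2 then (cube 2 (1+m) (Stmt4Aux.outerL m z.1), cube 2 (1+m) (Stmt4Aux.innerL m z.1))
        else (cube 2 (1+m) (Stmt4Aux.innerL m z.1), cube 2 (1+m) (Stmt4Aux.outerL m z.1))) with hP8def
  have hP8card : P8.card ≤ 8 := by
    refine le_trans Finset.card_image_le ?_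
    simp [Finset.card_univ]
  have key : ∀ Q Q' : ↥(QcolOf 2 (1+m) (Fset 2)),
      (if ((Q : Set (Pt 2)) ∩ (Q' : Set (Pt 2))).Nonempty then |f ↑Q - f ↑Q'| ^ p else 0)
        ≤ (if ((Q : Set (Pt 2)), (Q' : Set (Pt 2))) ∈ P8 then (1:ℝ) else 0) := by
    intro Q Q'
    have hite : (0:ℝ) ≤ if ((Q : Set (Pt 2)), (Q' : Set (Pt 2))) ∈ P8 then (1:ℝ) else 0 := by
      split <;> norm_num
    by_cases hne : ((Q : Set (Pt 2)) ∩ (Q' : Set (Pt 2))).Nonempty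
    · rw [if_pos hne]
      by_cases h1 : (Q : Set (Pt 2)) ⊆ Qtwo 2 <;> by_cases h2 : (Q' : Set (Pt 2)) ⊆ Qtwo 2
      · simp only [hfdef, if_pos h1, if_pos h2]
        rw [sub_self, abs_zero, Real.zero_rpow hp0]
        exact hite
      · obtain ⟨s, hA, hB⟩ := Stmt4Aux.core Q.2 Q'.2 hne h1 h2
        have hmemP : ((Q : Set (Pt 2)), (Q' : Set (Pt 2))) ∈ P8 :=
          Finset.mem_image.2 ⟨(s, false), Finset.mem_univ _, by simp [hA, hB]⟩
        rw [if_pos hmemP]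
        simp only [hfdef, if_pos h1, if_neg h2]
        rw [sub_zero, abs_one, Real.one_rpow]
      · obtain ⟨s, hA, hB⟩ := Stmt4Aux.core Q'.2 Q.2 (hne.imp fun x hx => ⟨hx.2, hx.1⟩) h2 h1
        have hmemP : ((Q : Set (Pt 2)), (Q' : Set (Pt 2))) ∈ P8 :=
          Finset.mem_image.2 ⟨(s, true), Finset.mem_univ _, by simp [hA, hB]⟩
        rw [if_pos hmemP]
        simp only [hfdef, if_neg h1, if_pos h2]
        rw [zero_sub, abs_neg, abs_one, Real.one_rpow]
      · simp only [hfdef, if_neg h1, if_neg h2]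
        rw [sub_self, abs_zero, Real.zero_rpow hp0]
        exact hite
    · rw [if_neg hne]
      exact hite
  have hT : (∑' Q : ↥(QcolOf 2 (1+m) (Fset 2)), ∑' Q' : ↥(QcolOf 2 (1+m) (Fset 2)),
      if ((Q : Set (Pt 2)) ∩ (Q' : Set (Pt 2))).Nonempty then |f ↑Q - f ↑Q'| ^ p else 0) ≤ 8 := by
    rw [tsum_fintype]
    calc (∑ Q : ↥(QcolOf 2 (1+m) (Fset 2)), ∑' Q' : ↥(QcolOf 2 (1+m) (Fset 2)),
          if ((Q : Set (Pt 2)) ∩ (Q' : Set (Pt 2))).Nonempty then |f ↑Q - f ↑Q'| ^ p else 0)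
        = ∑ Q : ↥(QcolOf 2 (1+m) (Fset 2)), ∑ Q' : ↥(QcolOf 2 (1+m) (Fset 2)),
          if ((Q : Set (Pt 2)) ∩ (Q' : Set (Pt 2))).Nonempty then |f ↑Q - f ↑Q'| ^ p else 0 :=
          Finset.sum_congr rfl (fun Q _ => tsum_fintype _)
      _ ≤ ∑ Q : ↥(QcolOf 2 (1+m) (Fset 2)), ∑ Q' : ↥(QcolOf 2 (1+m) (Fset 2)),
          (if ((Q : Set (Pt 2)), (Q' : Set (Pt 2))) ∈ P8 then (1:ℝ) else 0) :=
          Finset.sum_le_sum fun Q _ => Finset.sum_le_sum fun Q' _ => key Q Q'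
      _ = ∑ z : ↥(QcolOf 2 (1+m) (Fset 2)) × ↥(QcolOf 2 (1+m) (Fset 2)),
          (if ((z.1 : Set (Pt 2)), (z.2 : Set (Pt 2))) ∈ P8 then (1:ℝ) else 0) := by
          rw [← Finset.univ_product_univ, Finset.sum_product]
      _ = ((Finset.univ.filter (fun z : ↥(QcolOf 2 (1+m) (Fset 2)) × ↥(QcolOf 2 (1+m) (Fset 2)) =>
            ((z.1 : Set (Pt 2)), (z.2 : Set (Pt 2))) ∈ P8)).card : ℝ) := Finset.sum_boole _ _
      _ ≤ (P8.card : ℝ) := by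
          have hinj : Set.InjOn (fun z : ↥(QcolOf 2 (1+m) (Fset 2)) × ↥(QcolOf 2 (1+m) (Fset 2)) =>
              ((z.1 : Set (Pt 2)), (z.2 : Set (Pt 2))))
              ↑(Finset.univ.filter (fun z : ↥(QcolOf 2 (1+m) (Fset 2)) × ↥(QcolOf 2 (1+m) (Fset 2)) =>
                ((z.1 : Set (Pt 2)), (z.2 : Set (Pt 2))) ∈ P8)) := by
            intro a _ b _ h
            have h1 : (a.1 : Set (Pt 2)) = (b.1 : Set (Pt 2)) := congrArg Prod.fst h
            have h2 : (a.2 : Set (Pt 2)) = (b.2 : Set (Pt 2)) := congrArg Prod.snd h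
            exact Prod.ext (Subtype.ext h1) (Subtype.ext h2)
          have := Finset.card_le_card_of_injOn _ (fun z hz => (Finset.mem_filter.1 hz).2) hinj
          exact_mod_cast this
      _ ≤ 8 := by exact_mod_cast hP8card
  unfold energy
  linarith [hT]
end
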